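/- arXiv:1410.7441 — 10 statements merged into one kernel-verified Lean document; each statement's English description precedes it below -/
import Mathlib

section
/- For any square matrix X ∈ Mₙ(ℂ), trace X = 0 if and only if there exists an orthonormal basis {f₁,…,fₙ} of ℂⁿ such that ⟨X fⱼ, fⱼ⟩ = 0 for all j = 1,…,n. -/
open Complex Module

section Aux

variable {E : Type*} [NormedAddCommGroup E] [InnerProductSpace ℂ E]
local notation "⟪" x ", " y "⟫" => @inner ℂ _ _ x y

lemma pair_lemma (T : E →ₗ[ℂ] E) (u v : E) (hu : ⟪u, u⟫ = 1) (hv : ⟪v, v⟫ = 1)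
    (huv : ⟪u, v⟫ = 0) {t : ℝ} (ht0 : 0 ≤ t) (ht1 : t ≤ 1) :
    ∃ c s : ℂ, ⟪c • u + s • v, c • u + s • v⟫ = 1 ∧
      ⟪c • u + s • v, T (c • u + s • v)⟫ =
        (1 - (t : ℂ)) * ⟪u, T u⟫ + (t : ℂ) * ⟪v, T v⟫ := by
  have hvu : ⟪v, u⟫ = 0 := by rw [← inner_conj_symm, huv, map_zero]
  set a := ⟪u, T u⟫ with ha
  set b := ⟪v, T v⟫ with hb
  set p := ⟪u, T v⟫ with hp
  set q := ⟪v, T u⟫ with hq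
  have key : ∀ c s : ℂ, ⟪c • u + s • v, c • u + s • v⟫ = (starRingEnd ℂ) c * c + (starRingEnd ℂ) s * s := by
    intro c s
    simp only [inner_add_add_self, inner_smul_left, inner_smul_right, hu, hv, huv, hvu]
    ring
  have key2 : ∀ c s : ℂ, ⟪c • u + s • v, T (c • u + s • v)⟫ =
      (starRingEnd ℂ) c * c * a + (starRingEnd ℂ) c * s * p + (starRingEnd ℂ) s * c * q + (starRingEnd ℂ) s * s * b := by
    intro c s
    simp only [map_add, map_smul, inner_add_add_self, inner_add_left, inner_add_right,
      inner_smul_left, inner_smul_right, ha, hb, hp, hq]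
    ring
  by_cases hab : a = b
  · refine ⟨1, 0, ?_, ?_⟩
    · rw [key]; simp
    · rw [key2]; simp [hab]; ring
  obtain ⟨φ, hφ⟩ : ∃ φ : ℝ, ((b - a)⁻¹ * (exp (φ * I) * p + exp (-(φ * I)) * q)).im = 0 := by
    set h : ℝ → ℝ := fun φ => ((b - a)⁻¹ * (exp (φ * I) * p + exp (-(φ * I)) * q)).im with hh
    have hcont : Continuous h := by
      apply Complex.continuous_im.comp
      fun_prop
    have hneg : h Real.pi = - h 0 := by
      have e1 : Complex.exp ((Real.pi : ℝ) * I) = -1 := by exact_mod_cast Complex.exp_pi_mul_I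
      have e2 : Complex.exp (-((Real.pi : ℝ) * I)) = -1 := by rw [Complex.exp_neg, e1]; norm_num
      have e0 : Complex.exp (((0:ℝ) : ℂ) * I) = 1 := by norm_num
      have e0' : Complex.exp (-(((0:ℝ) : ℂ) * I)) = 1 := by norm_num
      show ((b - a)⁻¹ * (Complex.exp ((Real.pi:ℝ) * I) * p + Complex.exp (-((Real.pi:ℝ) * I)) * q)).im
        = -((b - a)⁻¹ * (Complex.exp (((0:ℝ):ℂ) * I) * p + Complex.exp (-(((0:ℝ):ℂ) * I)) * q)).im
      rw [e1, e2, e0, e0']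
      rw [show (b - a)⁻¹ * (-1 * p + -1 * q) = -((b - a)⁻¹ * (1 * p + 1 * q)) by ring, Complex.neg_im]
    rcases le_total (h 0) 0 with h0 | h0
    · have hge : (0:ℝ) ≤ h Real.pi := by rw [hneg]; linarith
      obtain ⟨φ, _, hφ⟩ := intermediate_value_Icc (le_of_lt Real.pi_pos) hcont.continuousOn
        (Set.mem_Icc.2 ⟨h0, hge⟩)
      exact ⟨φ, hφ⟩
    · have hle : h Real.pi ≤ 0 := by rw [hneg]; linarith
      obtain ⟨φ, _, hφ⟩ := intermediate_value_Icc' (le_of_lt Real.pi_pos) hcont.continuousOn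
        (Set.mem_Icc.2 ⟨hle, h0⟩)
      exact ⟨φ, hφ⟩
  set z : ℂ := (b - a)⁻¹ * (exp (φ * I) * p + exp (-(φ * I)) * q) with hz
  have hzre : (z.re : ℂ) = z := by
    rw [← Complex.re_add_im z, hφ]; simp
  have hzz : exp (φ * I) * p + exp (-(φ * I)) * q = (z.re : ℂ) * (b - a) := by
    rw [hzre, hz]
    field_simp [sub_ne_zero.2 (Ne.symm hab)]
  obtain ⟨θ, hθ⟩ : ∃ θ : ℝ, Real.sin θ ^ 2 + z.re * (Real.cos θ * Real.sin θ) = t := by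
    set g : ℝ → ℝ := fun θ => Real.sin θ ^ 2 + z.re * (Real.cos θ * Real.sin θ) with hg
    have hcont : Continuous g := by fun_prop
    have h0 : g 0 = 0 := by simp [hg]
    have h1 : g (Real.pi / 2) = 1 := by simp [hg]
    have hmem : t ∈ Set.Icc (g 0) (g (Real.pi/2)) := by rw [h0, h1]; exact ⟨ht0, ht1⟩
    obtain ⟨θ, _, hθ⟩ := intermediate_value_Icc (by positivity : (0:ℝ) ≤ Real.pi/2)
      hcont.continuousOn hmem
    exact ⟨θ, hθ⟩
  have hee : Complex.exp (-((φ:ℂ) * I)) * Complex.exp ((φ:ℂ) * I) = 1 := by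
    rw [← Complex.exp_add]; simp
  have hfix : (φ:ℂ) * -I = -((φ:ℂ) * I) := by ring
  refine ⟨(Real.cos θ : ℂ), exp (φ * I) * Real.sin θ, ?_, ?_⟩
  · rw [key]
    simp only [map_mul, Complex.conj_ofReal, ← Complex.exp_conj, Complex.conj_I]
    rw [hfix]
    have hsc : ((Real.sin θ)^2 + (Real.cos θ)^2 : ℝ) = 1 := Real.sin_sq_add_cos_sq θ
    calc (Real.cos θ:ℂ) * (Real.cos θ:ℂ) + cexp (-(↑φ * I)) * ↑(Real.sin θ) * (cexp (↑φ * I) * ↑(Real.sin θ))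
        = (cexp (-(↑φ * I)) * cexp (↑φ * I)) * (Real.sin θ:ℂ)^2 + (Real.cos θ:ℂ)^2 := by ring
      _ = (((Real.sin θ)^2 + (Real.cos θ)^2 : ℝ) : ℂ) := by rw [hee]; push_cast; ring
      _ = 1 := by rw [hsc]; norm_num
  · rw [key2]
    simp only [map_mul, Complex.conj_ofReal, ← Complex.exp_conj, Complex.conj_I]
    rw [hfix]
    have hc2 : (Real.cos θ:ℂ)^2 = 1 - (Real.sin θ:ℂ)^2 := by
      have := Real.sin_sq_add_cos_sq θ
      have : ((Real.sin θ)^2 + (Real.cos θ)^2 : ℂ) = 1 := by exact_mod_cast this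
      linear_combination this
    calc (Real.cos θ:ℂ) * ↑(Real.cos θ) * a + ↑(Real.cos θ) * (cexp (↑φ * I) * ↑(Real.sin θ)) * p
          + cexp (-(↑φ * I)) * ↑(Real.sin θ) * ↑(Real.cos θ) * q
          + cexp (-(↑φ * I)) * ↑(Real.sin θ) * (cexp (↑φ * I) * ↑(Real.sin θ)) * b
        = (Real.cos θ:ℂ)^2 * a + ((Real.cos θ:ℂ) * (Real.sin θ:ℂ)) * (cexp (↑φ * I) * p + cexp (-(↑φ * I)) * q)
          + (cexp (-(↑φ * I)) * cexp (↑φ * I)) * (Real.sin θ:ℂ)^2 * b := by ring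
      _ = (Real.cos θ:ℂ)^2 * a + ((Real.cos θ:ℂ) * (Real.sin θ:ℂ)) * ((z.re:ℂ) * (b - a)) + (Real.sin θ:ℂ)^2 * b := by
          rw [hzz, hee]; ring
      _ = a + ((Real.sin θ:ℂ)^2 + (z.re:ℂ) * ((Real.cos θ:ℂ) * (Real.sin θ:ℂ))) * (b - a) := by
          rw [hc2]; ring
      _ = (1 - (t:ℂ)) * a + (t:ℂ) * b := by
          have : ((Real.sin θ:ℂ)^2 + (z.re:ℂ) * ((Real.cos θ:ℂ) * (Real.sin θ:ℂ))) = (t:ℂ) := by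
            push_cast [← hθ]; ring
          rw [this]; ring

lemma merge_lemma (T : E →ₗ[ℂ] E) : ∀ m : ℕ, ∀ e : Fin (m+1) → E, Orthonormal ℂ e →
    ∀ c : Fin (m+1) → ℝ, (∀ i, 0 ≤ c i) → (∑ i, c i) = 1 →
    (∑ i, (c i : ℂ) * ⟪e i, T (e i)⟫) = 0 →
    ∃ w : E, ⟪w, w⟫ = 1 ∧ ⟪w, T w⟫ = 0 := by
  intro m
  induction m with
  | zero =>
    intro e he c _ hsum hws
    refine ⟨e 0, ?_, ?_⟩
    · simpa using orthonormal_iff_ite.mp he 0 0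
    · have hc : c 0 = 1 := by simpa using hsum
      have := hws
      rw [Fin.sum_univ_one, hc] at this
      simpa using this
  | succ m ih =>
    intro e he c hc0 hsum hws
    have hite := orthonormal_iff_ite.mp he
    have h00 : ⟪e 0, e 0⟫ = 1 := by simpa using hite 0 0
    have h11 : ⟪e 1, e 1⟫ = 1 := by simpa using hite 1 1
    have h01 : ⟪e 0, e 1⟫ = 0 := by simpa using hite 0 1
    set t : ℝ := if c 0 + c 1 = 0 then 0 else c 1 / (c 0 + c 1) with htdef
    have hadd : (0:ℝ) ≤ c 0 + c 1 := add_nonneg (hc0 0) (hc0 1)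
    have ht0 : 0 ≤ t := by
      rw [htdef]; split
      · exact le_refl 0
      · exact div_nonneg (hc0 1) hadd
    have ht1 : t ≤ 1 := by
      rw [htdef]; split
      · exact zero_le_one
      · rename_i h
        rw [div_le_one (lt_of_le_of_ne hadd (Ne.symm h))]
        linarith [hc0 0]
    have h10 : e 0 ≠ e 1 → True := fun _ => trivial
    obtain ⟨cc, ss, hw1, hw2⟩ := pair_lemma T (e 0) (e 1) h00 h11 h01 ht0 ht1
    set w : E := cc • e 0 + ss • e 1 with hwdef
    -- the merged identity
    have hmerge : ((c 0 + c 1 : ℝ) : ℂ) * ⟪w, T w⟫ = (c 0 : ℂ) * ⟪e 0, T (e 0)⟫ + (c 1 : ℂ) * ⟪e 1, T (e 1)⟫ := by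
      rw [hw2, htdef]
      by_cases h : c 0 + c 1 = 0
      · have hc0' : c 0 = 0 := le_antisymm (by linarith [hc0 1]) (hc0 0)
        have hc1' : c 1 = 0 := by linarith
        simp [h, hc0', hc1']
      · rw [if_neg h]
        have h' : ((c 0 : ℂ) + (c 1 : ℂ)) ≠ 0 := by
          rw [← Complex.ofReal_add]; exact_mod_cast h
        push_cast
        field_simp
        ring
    -- new orthonormal family
    set e' : Fin (m+1) → E := Fin.cons w (fun i => e i.succ.succ) with he'def
    have he' : Orthonormal ℂ e' := by
      rw [orthonormal_iff_ite]
      intro i j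
      have hwx : ∀ k : Fin m, ⟪w, e k.succ.succ⟫ = 0 := by
        intro k
        rw [hwdef, inner_add_left, inner_smul_left, inner_smul_left]
        rw [hite 0 k.succ.succ, hite 1 k.succ.succ]
        have h0k : (0 : Fin (m+2)) ≠ k.succ.succ := by
          simp [Fin.ext_iff]
        have h1k : (1 : Fin (m+2)) ≠ k.succ.succ := by
          simp [Fin.ext_iff]
        rw [if_neg h0k, if_neg h1k]; ring
      have hxw : ∀ k : Fin m, ⟪e k.succ.succ, w⟫ = 0 := by
        intro k
        rw [← inner_conj_symm, hwx k, map_zero]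
      refine Fin.cases ?_ ?_ i
      · refine Fin.cases ?_ ?_ j
        · simpa [he'def] using hw1
        · intro k
          simpa [he'def, (Fin.succ_ne_zero k).symm] using hwx k
      · intro k
        refine Fin.cases ?_ ?_ j
        · simpa [he'def] using hxw k
        · intro l
          simp only [he'def, Fin.cons_succ]
          rw [hite k.succ.succ l.succ.succ]
          simp [Fin.succ_inj]
    set c' : Fin (m+1) → ℝ := Fin.cons (c 0 + c 1) (fun i => c i.succ.succ) with hc'def
    have hc0' : ∀ i, 0 ≤ c' i := by
      intro i
      refine Fin.cases ?_ ?_ i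
      · simpa [hc'def] using hadd
      · intro k; simpa [hc'def] using hc0 k.succ.succ
    have hsum2 : ∀ f : Fin (m+2) → ℂ, (∑ i, f i) = f 0 + f 1 + ∑ i : Fin m, f i.succ.succ := by
      intro f
      rw [Fin.sum_univ_succ, Fin.sum_univ_succ, Fin.succ_zero_eq_one]
      ring
    have hsum2' : ∀ f : Fin (m+2) → ℝ, (∑ i, f i) = f 0 + f 1 + ∑ i : Fin m, f i.succ.succ := by
      intro f
      rw [Fin.sum_univ_succ, Fin.sum_univ_succ, Fin.succ_zero_eq_one]
      ring
    have hsum' : (∑ i, c' i) = 1 := by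
      rw [Fin.sum_univ_succ]
      simp only [hc'def, Fin.cons_zero, Fin.cons_succ]
      rw [← hsum, hsum2' c]
    have hws' : (∑ i, (c' i : ℂ) * ⟪e' i, T (e' i)⟫) = 0 := by
      rw [Fin.sum_univ_succ]
      simp only [hc'def, he'def, Fin.cons_zero, Fin.cons_succ]
      rw [hmerge, ← hws, hsum2 (fun i => (c i : ℂ) * ⟪e i, T (e i)⟫)]
    exact ih e' he' c' hc0' hsum' hws'

lemma trace_onb [FiniteDimensional ℂ E] (T : E →ₗ[ℂ] E) {k : ℕ} (b : OrthonormalBasis (Fin k) ℂ E) :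
    LinearMap.trace ℂ E T = ∑ i, ⟪b i, T (b i)⟫ := by
  rw [LinearMap.trace_eq_matrix_trace ℂ b.toBasis, Matrix.trace]
  congr 1; ext i
  rw [Matrix.diag_apply, LinearMap.toMatrix_apply, b.coe_toBasis, b.coe_toBasis_repr_apply,
    b.repr_apply_apply]

lemma extend_onb [FiniteDimensional ℂ E] {n : ℕ} (hn : finrank ℂ E = n + 1) (w : E)
    (hw : ⟪w, w⟫ = 1) (g : OrthonormalBasis (Fin n) ℂ ((ℂ ∙ w)ᗮ : Submodule ℂ E)) :
    ∃ f : OrthonormalBasis (Fin (n+1)) ℂ E, f 0 = w ∧ ∀ k : Fin n, f k.succ = (g k : E) := by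
  set v : Fin (n+1) → E := Fin.cons w (fun i => (g i : E)) with hvdef
  have hwg : ∀ k : Fin n, ⟪w, (g k : E)⟫ = 0 := by
    intro k
    have := (Submodule.mem_orthogonal (ℂ ∙ w) (g k : E)).mp (g k).2
    exact this w (Submodule.mem_span_singleton_self w)
  have hgw : ∀ k : Fin n, ⟪(g k : E), w⟫ = 0 := by
    intro k; rw [← inner_conj_symm, hwg k, map_zero]
  have hgg : ∀ k l : Fin n, ⟪(g k : E), (g l : E)⟫ = if k = l then 1 else 0 := by
    intro k l
    rw [← Submodule.coe_inner]
    exact orthonormal_iff_ite.mp g.orthonormal k l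
  have hon : Orthonormal ℂ v := by
    rw [orthonormal_iff_ite]
    intro i j
    refine Fin.cases ?_ ?_ i
    · refine Fin.cases ?_ ?_ j
      · simpa [hvdef] using hw
      · intro k; simpa [hvdef, (Fin.succ_ne_zero k).symm] using hwg k
    · intro k
      refine Fin.cases ?_ ?_ j
      · simpa [hvdef] using hgw k
      · intro l
        simp only [hvdef, Fin.cons_succ]
        rw [hgg k l]
        simp [Fin.succ_inj]
  have hcard : Fintype.card (Fin (n+1)) = finrank ℂ E := by simp [hn]
  have hsp : ⊤ ≤ Submodule.span ℂ (Set.range v) :=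
    (hon.linearIndependent.span_eq_top_of_card_eq_finrank hcard).ge
  refine ⟨OrthonormalBasis.mk hon hsp, ?_, ?_⟩
  · rw [OrthonormalBasis.coe_mk]; simp [hvdef]
  · intro k; rw [OrthonormalBasis.coe_mk]; simp [hvdef]

end Aux


lemma lemC (n : ℕ) : ∀ (E : Type) [NormedAddCommGroup E] [InnerProductSpace ℂ E]
    [FiniteDimensional ℂ E], finrank ℂ E = n → ∀ T : E →ₗ[ℂ] E, LinearMap.trace ℂ E T = 0 →
    ∃ f : OrthonormalBasis (Fin n) ℂ E, ∀ j, (inner ℂ (f j) (T (f j)) : ℂ) = 0 := by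
  induction n with
  | zero =>
    intro E iN iI iF hn T hT
    exact ⟨(stdOrthonormalBasis ℂ E).reindex (finCongr hn), fun j => Fin.elim0 j⟩
  | succ n ih =>
    intro E iN iI iF hn T hT
    -- find a unit vector with zero numerical value
    set e := (stdOrthonormalBasis ℂ E).reindex (finCongr hn) with hedef
    have hsum : (∑ i, (inner ℂ (e i) (T (e i)) : ℂ)) = 0 := by
      rw [← trace_onb T e, hT]
    obtain ⟨w, hww, hwT⟩ := merge_lemma T n e e.orthonormal (fun _ => 1/(n+1))
      (fun i => by positivity)
      (by
        rw [Finset.sum_const, Finset.card_univ, Fintype.card_fin, nsmul_eq_mul, Nat.cast_add, Nat.cast_one]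
        field_simp)
      (by
        rw [← Finset.mul_sum, hsum, mul_zero])
    have hw0 : w ≠ 0 := by
      intro h; rw [h, inner_zero_left] at hww; exact zero_ne_one hww
    haveI : Fact (finrank ℂ E = n + 1) := ⟨hn⟩
    set K : Submodule ℂ E := (ℂ ∙ w)ᗮ with hKdef
    have hK : finrank ℂ K = n := Submodule.finrank_orthogonal_span_singleton hw0
    set S : K →ₗ[ℂ] K := (Submodule.orthogonalProjectionOnto K).toLinearMap.comp (T.comp K.subtype) with hSdef
    have hdiag : ∀ x : K, (inner ℂ x (S x) : ℂ) = inner ℂ (x : E) (T (x : E)) := by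
      intro x
      rw [hSdef]
      simp only [LinearMap.comp_apply, ContinuousLinearMap.coe_coe, Submodule.subtype_apply]
      rw [Submodule.inner_orthogonalProjectionOnto_eq_of_mem_left]
    -- compute trace of S
    set g₀ := (stdOrthonormalBasis ℂ K).reindex (finCongr hK) with hg₀def
    obtain ⟨b, hb0, hbs⟩ := extend_onb hn w hww g₀
    have htrT : (0:ℂ) = inner ℂ w (T w) + ∑ i : Fin n, (inner ℂ ((g₀ i : E)) (T (g₀ i : E)) : ℂ) := by
      rw [← hT, trace_onb T b, Fin.sum_univ_succ, hb0]
      congr 1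
      exact Finset.sum_congr rfl fun i _ => by rw [hbs i]
    have htrS : LinearMap.trace ℂ K S = 0 := by
      rw [trace_onb S g₀]
      have : ∀ i : Fin n, (inner ℂ (g₀ i) (S (g₀ i)) : ℂ) = inner ℂ ((g₀ i : E)) (T (g₀ i : E)) :=
        fun i => hdiag (g₀ i)
      rw [Finset.sum_congr rfl fun i _ => this i]
      have := htrT
      rw [hwT] at this
      linear_combination -this
    obtain ⟨g, hg⟩ := ih K hK S htrS
    obtain ⟨f, hf0, hfs⟩ := extend_onb hn w hww g
    refine ⟨f, fun j => ?_⟩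
    refine Fin.cases ?_ ?_ j
    · rw [hf0]; exact hwT
    · intro k
      rw [hfs k, ← hdiag (g k)]
      exact hg k

/-- For `X ∈ Mₙ(ℂ)`, `trace X = 0` iff there is an orthonormal basis
`{f j}` of `ℂⁿ` in which `X` has zero diagonal, i.e. `⟨X f j, f j⟩ = 0` for all `j`. -/
theorem trace_zero_iff_zero_diagonal {n : ℕ} (X : Matrix (Fin n) (Fin n) ℂ) :
    X.trace = 0 ↔
      ∃ f : OrthonormalBasis (Fin n) ℂ (EuclideanSpace ℂ (Fin n)),
        ∀ j, (inner ℂ (f j) (Matrix.toEuclideanLin X (f j)) : ℂ) = 0 := by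
  have htr : LinearMap.trace ℂ (EuclideanSpace ℂ (Fin n)) (Matrix.toEuclideanLin X) = X.trace := by
    have h1 : Matrix.toEuclideanLin X =
        (WithLp.linearEquiv 2 ℂ (Fin n → ℂ)).symm.conj (Matrix.toLin' X) := rfl
    rw [h1, LinearMap.trace_conj']
    rw [LinearMap.trace_eq_matrix_trace ℂ (Pi.basisFun ℂ (Fin n)),
      LinearMap.toMatrix_eq_toMatrix', LinearMap.toMatrix'_toLin']
  constructor
  · intro hX
    have hfr : finrank ℂ (EuclideanSpace ℂ (Fin n)) = n := by
      simp [finrank_euclideanSpace]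
    obtain ⟨f, hf⟩ := lemC n (EuclideanSpace ℂ (Fin n)) hfr (Matrix.toEuclideanLin X)
      (by rw [htr, hX])
    exact ⟨f, hf⟩
  · rintro ⟨f, hf⟩
    rw [← htr, trace_onb (Matrix.toEuclideanLin X) f]
    exact Finset.sum_eq_zero fun i _ => hf i
end

section
/- Let X ∈ Mₙ(ℂ) and λ ∈ ℂ. Then trace X = nλ if and only if there exists an orthonormal basis {f₁,…,fₙ} of ℂⁿ with ⟨X fⱼ, fⱼ⟩ = λ for every j. -/
open scoped InnerProductSpace ComplexConjugate
open Complex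
variable {E : Type} [NormedAddCommGroup E] [InnerProductSpace ℂ E]

/-- trace = sum of diagonal inner products over any orthonormal basis. -/
lemma trace_eq_sum_inner' [FiniteDimensional ℂ E] {ι : Type*} [Fintype ι] [DecidableEq ι]
    (b : OrthonormalBasis ι ℂ E) (T : E →ₗ[ℂ] E) :
    LinearMap.trace ℂ E T = ∑ i, ⟪b i, T (b i)⟫_ℂ := by
  rw [LinearMap.trace_eq_matrix_trace ℂ b.toBasis, Matrix.trace]
  congr 1
  ext i
  rw [Matrix.diag_apply, LinearMap.toMatrix_apply, b.coe_toBasis,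
    b.coe_toBasis_repr_apply, b.repr_apply_apply]

/-- Segment lemma: for an orthonormal pair `u, v`, every convex combination of the
diagonal values `⟪u,Tu⟫`, `⟪v,Tv⟫` is attained by a unit vector in their span. -/
lemma segment_lemma (T : E →ₗ[ℂ] E) {u v : E} (hu : ‖u‖ = 1) (hv : ‖v‖ = 1)
    (huv : ⟪u, v⟫_ℂ = 0) {t : ℝ} (ht0 : 0 ≤ t) (ht1 : t ≤ 1) :
    ∃ w ∈ Submodule.span ℂ {u, v}, ‖w‖ = 1 ∧
      ⟪w, T w⟫_ℂ = (t : ℂ) * ⟪u, T u⟫_ℂ + (1 - (t : ℂ)) * ⟪v, T v⟫_ℂ := by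
  set a := ⟪u, T u⟫_ℂ with ha
  set b := ⟪v, T v⟫_ℂ with hb
  by_cases hab : a = b
  · refine ⟨u, Submodule.subset_span (by simp), hu, ?_⟩
    rw [← ha, hab]; ring
  -- choose φ so that (e^{iφ} p + e^{-iφ} q) * conj (a-b) is real
  set p := ⟪u, T v⟫_ℂ
  set q := ⟪v, T u⟫_ℂ
  have hcont : Continuous fun φ : ℝ =>
      ((Complex.exp (φ * I) * p + Complex.exp (-(φ * I)) * q) * (starRingEnd ℂ) (a - b)).im := by
    fun_prop
  have hneg : ∀ φ : ℝ, (fun φ : ℝ =>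
      ((Complex.exp (φ * I) * p + Complex.exp (-(φ * I)) * q) * (starRingEnd ℂ) (a - b)).im)
      (φ + Real.pi) = - (fun φ : ℝ =>
      ((Complex.exp (φ * I) * p + Complex.exp (-(φ * I)) * q) * (starRingEnd ℂ) (a - b)).im) φ := by
    intro φ
    have h1 : Complex.exp ((↑(φ + Real.pi)) * I) = - Complex.exp (φ * I) := by
      push_cast
      rw [add_mul, Complex.exp_add, Complex.exp_pi_mul_I]
      ring
    have hpi : Complex.exp (-(↑Real.pi * I)) = -1 := by
      rw [Complex.exp_neg, Complex.exp_pi_mul_I]; norm_num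
    have h2 : Complex.exp (-((↑(φ + Real.pi)) * I)) = - Complex.exp (-(φ * I)) := by
      push_cast
      rw [add_mul, neg_add, Complex.exp_add, hpi]
      ring
    simp only [h1, h2]
    rw [← Complex.neg_im]
    congr 1
    ring
  -- IVT to find φ
  have hIVT : ∃ φ : ℝ, ((Complex.exp (φ * I) * p + Complex.exp (-(φ * I)) * q)
      * (starRingEnd ℂ) (a - b)).im = 0 := by
    set f : ℝ → ℝ := fun φ =>
      ((Complex.exp (φ * I) * p + Complex.exp (-(φ * I)) * q) * (starRingEnd ℂ) (a - b)).im
    have hf : f Real.pi = - f 0 := by simpa using hneg 0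
    rcases le_total (f 0) 0 with h0 | h0
    · have : (0 : ℝ) ∈ Set.Icc (f 0) (f Real.pi) := ⟨h0, by rw [hf]; linarith⟩
      obtain ⟨φ, _, hφ⟩ := intermediate_value_Icc Real.pi_pos.le hcont.continuousOn this
      exact ⟨φ, hφ⟩
    · have : (0 : ℝ) ∈ Set.Icc (f Real.pi) (f 0) := ⟨by rw [hf]; linarith, h0⟩
      obtain ⟨φ, _, hφ⟩ := intermediate_value_Icc' Real.pi_pos.le hcont.continuousOn this
      exact ⟨φ, hφ⟩
  obtain ⟨φ, hφ⟩ := hIVT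
  set β : ℂ := Complex.exp (φ * I) with hβ
  have hβ0 : β ≠ 0 := Complex.exp_ne_zero _
  have hβinv : Complex.exp (-(φ * I)) = β⁻¹ := by rw [Complex.exp_neg]
  set c : ℂ := β * p + β⁻¹ * q with hc
  have hφ' : (c * (starRingEnd ℂ) (a - b)).im = 0 := by rw [hc, ← hβinv]; exact hφ
  have hab0 : a - b ≠ 0 := sub_ne_zero.mpr hab
  have hns : Complex.normSq (a - b) ≠ 0 := (Complex.normSq_pos.mpr hab0).ne'
  set s : ℝ := (c * (starRingEnd ℂ) (a - b)).re / Complex.normSq (a - b) with hs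
  have hreal : c * (starRingEnd ℂ) (a - b) = ((c * (starRingEnd ℂ) (a - b)).re : ℂ) := by
    rw [Complex.ext_iff]
    refine ⟨by simp, ?_⟩
    have h := hφ'
    simp only [Complex.mul_im, Complex.ofReal_im, map_sub, Complex.conj_re, Complex.conj_im,
      Complex.sub_re, Complex.sub_im] at h ⊢
    linarith
  have key : c * (Complex.normSq (a - b) : ℂ)
      = ((c * (starRingEnd ℂ) (a - b)).re : ℂ) * (a - b) := by
    rw [← hreal, ← Complex.mul_conj (a - b)]; ring
  have hnsC : (Complex.normSq (a - b) : ℂ) ≠ 0 := by exact_mod_cast hns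
  have hcs : c = (s : ℂ) * (a - b) := by
    have hsC : (s : ℂ) = ((c * (starRingEnd ℂ) (a - b)).re : ℂ) / (Complex.normSq (a - b) : ℂ) := by
      rw [hs]; push_cast; ring
    rw [hsC, div_mul_eq_mul_div, ← key, mul_div_assoc, div_self hnsC, mul_one]
  -- IVT to find θ
  have hg : ∃ θ : ℝ, Real.cos θ ^ 2 + s * Real.sin θ * Real.cos θ = t := by
    set g : ℝ → ℝ := fun θ => Real.cos θ ^ 2 + s * Real.sin θ * Real.cos θ with hgdef
    have hgc : Continuous g := by fun_prop
    have hg0 : g 0 = 1 := by simp [hgdef]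
    have hgpi : g (Real.pi / 2) = 0 := by simp [hgdef]
    have : t ∈ Set.Icc (g (Real.pi / 2)) (g 0) := by rw [hg0, hgpi]; exact ⟨ht0, ht1⟩
    obtain ⟨θ, _, hθ⟩ := intermediate_value_Icc' (by positivity) hgc.continuousOn this
    exact ⟨θ, hθ⟩
  obtain ⟨θ, hθ⟩ := hg
  set w : E := (Real.cos θ : ℂ) • u + ((Real.sin θ : ℂ) * β) • v with hw
  have hmem : w ∈ Submodule.span ℂ {u, v} := by
    apply Submodule.add_mem
    · exact Submodule.smul_mem _ _ (Submodule.subset_span (by simp))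
    · exact Submodule.smul_mem _ _ (Submodule.subset_span (by simp))
  have hvu : ⟪v, u⟫_ℂ = 0 := by rw [← inner_conj_symm, huv, map_zero]
  have huu : ⟪u, u⟫_ℂ = 1 := by
    rw [inner_self_eq_norm_sq_to_K, hu]; norm_num
  have hvv : ⟪v, v⟫_ℂ = 1 := by
    rw [inner_self_eq_norm_sq_to_K, hv]; norm_num
  have hconjβ : (starRingEnd ℂ) β = β⁻¹ := by
    rw [hβ, ← Complex.exp_conj, ← hβinv]
    congr 1
    simp [Complex.conj_ofReal]
  have hββ : β⁻¹ * β = 1 := inv_mul_cancel₀ hβ0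
  have hsc : ((Real.sin θ : ℂ))^2 + ((Real.cos θ : ℂ))^2 = 1 := by
    push_cast [← Complex.ofReal_pow]
    exact_mod_cast Real.sin_sq_add_cos_sq θ
  have hww : ⟪w, w⟫_ℂ = 1 := by
    rw [hw]
    simp only [inner_add_left, inner_add_right, inner_smul_left, inner_smul_right,
      huv, hvu, huu, hvv, map_mul, Complex.conj_ofReal, hconjβ]
    linear_combination (Real.sin θ : ℂ)^2 * hββ + hsc
  have hnw : ‖w‖ = 1 := by
    have h3 : (‖w‖ : ℝ)^2 = 1 := by
      rw [InnerProductSpace.norm_sq_eq_re_inner (𝕜 := ℂ), hww]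
      simp
    nlinarith [norm_nonneg w]
  refine ⟨w, hmem, hnw, ?_⟩
  have hTw : T w = (Real.cos θ : ℂ) • T u + ((Real.sin θ : ℂ) * β) • T v := by
    rw [hw]; simp
  rw [hw, hTw]
  simp only [inner_add_left, inner_add_right, inner_smul_left, inner_smul_right,
    map_mul, Complex.conj_ofReal, hconjβ]
  rw [← ha, ← hb]
  have htC : (t : ℂ) = (Real.cos θ : ℂ)^2 + (s : ℂ) * (Real.sin θ : ℂ) * (Real.cos θ : ℂ) := by
    rw [← hθ]; push_cast; ring
  rw [htC]
  have hcs' : β * p + β⁻¹ * q = (s : ℂ) * (a - b) := hcs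
  linear_combination ((Real.sin θ : ℂ) * (Real.cos θ : ℂ)) * hcs'
    + (Real.sin θ:ℂ)^2 * ⟪v, T v⟫_ℂ * hββ + ⟪v, T v⟫_ℂ * hsc

/-- Convex combination lemma: any convex combination of diagonal values of an
orthonormal family is attained by a unit vector in its span. -/
lemma convex_comb_lemma (T : E →ₗ[ℂ] E) :
    ∀ (m : ℕ) (f : Fin m → E), Orthonormal ℂ f → ∀ (t : Fin m → ℝ), (∀ i, 0 ≤ t i) →
      (∑ i, t i) = 1 →
      ∃ w ∈ Submodule.span ℂ (Set.range f), ‖w‖ = 1 ∧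
        ⟪w, T w⟫_ℂ = ∑ i, (t i : ℂ) * ⟪f i, T (f i)⟫_ℂ := by
  intro m
  induction m with
  | zero => intro f _ t _ hsum; simp at hsum
  | succ N ih =>
    intro f hf t ht hsum
    have hrest : ∀ i : Fin N, f i.succ ≠ f 0 := by
      intro i h
      have := hf.linearIndependent.injective h
      exact (Fin.succ_ne_zero i) this
    set r : ℝ := ∑ i : Fin N, t i.succ with hr
    have hsum' : t 0 + r = 1 := by rw [hr, ← Fin.sum_univ_succ]; exact hsum
    have hr0 : 0 ≤ r := Finset.sum_nonneg fun i _ => ht _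
    by_cases hrz : r = 0
    · -- all later weights vanish
      have hti : ∀ i : Fin N, t i.succ = 0 := by
        intro i
        have h := (Finset.sum_eq_zero_iff_of_nonneg (s := Finset.univ)
          (f := fun i : Fin N => t i.succ) (fun i _ => ht (Fin.succ i))).mp (hr ▸ hrz)
        exact h i (Finset.mem_univ i)
      have ht0 : t 0 = 1 := by linarith
      refine ⟨f 0, Submodule.subset_span ⟨0, rfl⟩, hf.1 0, ?_⟩
      rw [Fin.sum_univ_succ, ht0]
      simp [hti]
    · have hrpos : 0 < r := lt_of_le_of_ne hr0 (Ne.symm hrz)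
      obtain ⟨w', hw'mem, hw'norm, hw'val⟩ := ih (fun i => f i.succ)
        (hf.comp _ (Fin.succ_injective N)) (fun i => t i.succ / r)
        (fun i => div_nonneg (ht _) hr0)
        (by rw [← Finset.sum_div, ← hr, div_self hrz])
      -- f 0 is orthogonal to w'
      have horth : ⟪f 0, w'⟫_ℂ = 0 := by
        have hle : Submodule.span ℂ (Set.range fun i : Fin N => f i.succ)
            ≤ (ℂ ∙ (f 0))ᗮ := by
          rw [Submodule.span_le]
          rintro x ⟨i, rfl⟩
          rw [SetLike.mem_coe, Submodule.mem_orthogonal_singleton_iff_inner_right]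
          have := hf.2 (i := 0) (j := i.succ) (Fin.succ_ne_zero i).symm
          exact this
        have := hle hw'mem
        exact Submodule.mem_orthogonal_singleton_iff_inner_right.mp this
      have ht01 : t 0 ≤ 1 := by linarith
      obtain ⟨w, hwmem, hwnorm, hwval⟩ := segment_lemma T (hf.1 0) hw'norm
        horth (ht 0) ht01
      refine ⟨w, ?_, hwnorm, ?_⟩
      · have h1 : f 0 ∈ Submodule.span ℂ (Set.range f) := Submodule.subset_span ⟨0, rfl⟩
        have h2 : w' ∈ Submodule.span ℂ (Set.range f) := by
          refine Submodule.span_le.mpr ?_ hw'mem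
          rintro x ⟨i, rfl⟩
          exact Submodule.subset_span ⟨i.succ, rfl⟩
        have : Submodule.span ℂ {f 0, w'} ≤ Submodule.span ℂ (Set.range f) :=
          Submodule.span_le.mpr (by rintro x (rfl | rfl) <;> assumption)
        exact this hwmem
      · rw [hwval, hw'val, Fin.sum_univ_succ, Finset.mul_sum]
        congr 1
        refine Finset.sum_congr rfl fun i _ => ?_
        have hrC : ((1 : ℂ) - (t 0 : ℂ)) = ((r : ℝ) : ℂ) := by
          norm_cast
          linarith [hsum']
        have hrC0 : ((r : ℝ) : ℂ) ≠ 0 := by exact_mod_cast hrz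
        rw [hrC]
        push_cast
        field_simp

/-- Extend an orthonormal basis of `(ℂ ∙ w)ᗮ` by the unit vector `w`. -/
lemma onb_cons {N : ℕ} [FiniteDimensional ℂ E] (hE : Module.finrank ℂ E = N + 1)
    {w : E} (hw : ‖w‖ = 1) (g : OrthonormalBasis (Fin N) ℂ ((ℂ ∙ w)ᗮ : Submodule ℂ E)) :
    ∃ b : OrthonormalBasis (Fin (N + 1)) ℂ E, b 0 = w ∧ ∀ j : Fin N, b j.succ = (g j : E) := by
  set v : Fin (N + 1) → E := Fin.cons w (fun j => (g j : E)) with hv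
  have hww : ⟪w, w⟫_ℂ = 1 := by rw [inner_self_eq_norm_sq_to_K, hw]; norm_num
  have hwg : ∀ j : Fin N, ⟪w, (g j : E)⟫_ℂ = 0 := fun j =>
    Submodule.mem_orthogonal_singleton_iff_inner_right.mp (g j).2
  have hon : Orthonormal ℂ v := by
    rw [orthonormal_iff_ite]
    intro i j
    refine Fin.cases ?_ (fun i' => ?_) i
    · refine Fin.cases ?_ (fun j' => ?_) j
      · simpa [hv] using hww
      · simp [hv, hwg j', (Fin.succ_ne_zero j').symm]
    · refine Fin.cases ?_ (fun j' => ?_) j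
      · have h0 : ⟪(g i' : E), w⟫_ℂ = 0 := by rw [← inner_conj_symm, hwg i', map_zero]
        simp [hv, h0, Fin.succ_ne_zero i']
      · have h2 : ⟪(g i' : E), (g j' : E)⟫_ℂ = if i' = j' then 1 else 0 := by
          rw [← Submodule.coe_inner, orthonormal_iff_ite.mp g.orthonormal]
        simp [hv, h2, Fin.succ_inj]
  have hcard : Fintype.card (Fin (N + 1)) = Module.finrank ℂ E := by simp [hE]
  set b : OrthonormalBasis (Fin (N + 1)) ℂ E :=
    (basisOfOrthonormalOfCardEqFinrank hon hcard).toOrthonormalBasis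
      (by rwa [coe_basisOfOrthonormalOfCardEqFinrank]) with hbdef
  have hb : ⇑b = v := by
    rw [hbdef, Module.Basis.coe_toOrthonormalBasis, coe_basisOfOrthonormalOfCardEqFinrank]
  exact ⟨b, by rw [hb]; simp [hv], fun j => by rw [hb]; simp [hv]⟩

open FiniteDimensional in
/-- Main induction: trace nλ gives an orthonormal basis with constant diagonal λ. -/
lemma key_lemma : ∀ (N : ℕ) (E : Type) [NormedAddCommGroup E] [InnerProductSpace ℂ E]
    [FiniteDimensional ℂ E], Module.finrank ℂ E = N → ∀ (T : E →ₗ[ℂ] E) (lam : ℂ),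
    LinearMap.trace ℂ E T = (N : ℂ) * lam →
    ∃ f : OrthonormalBasis (Fin N) ℂ E, ∀ j, ⟪f j, T (f j)⟫_ℂ = lam := by
  intro N
  induction N with
  | zero =>
    intro E _ _ _ hE T lam _
    exact ⟨(stdOrthonormalBasis ℂ E).reindex (finCongr hE), fun j => j.elim0⟩
  | succ N ih =>
    intro E _ _ _ hE T lam htr
    set e : OrthonormalBasis (Fin (N + 1)) ℂ E :=
      (stdOrthonormalBasis ℂ E).reindex (finCongr hE) with he
    have htr' : ∑ i, ⟪e i, T (e i)⟫_ℂ = ((N : ℂ) + 1) * lam := by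
      rw [← trace_eq_sum_inner', htr]; push_cast; ring
    -- find unit w with ⟪w, T w⟫ = lam
    obtain ⟨w, -, hwnorm, hwval⟩ := convex_comb_lemma T (N + 1) e e.orthonormal
      (fun _ => 1 / (N + 1 : ℝ)) (fun _ => by positivity)
      (by rw [Finset.sum_const]; simp; field_simp)
    have hwval' : ⟪w, T w⟫_ℂ = lam := by
      have hne : ((N : ℂ) + 1) ≠ 0 := Nat.cast_add_one_ne_zero N
      rw [hwval, ← Finset.mul_sum, htr']
      push_cast
      field_simp
    have hw0 : w ≠ 0 := by
      intro h; rw [h, norm_zero] at hwnorm; norm_num at hwnorm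
    haveI := Fact.mk hE
    set K : Submodule ℂ E := (ℂ ∙ w)ᗮ with hKdef
    have hK : Module.finrank ℂ K = N := Submodule.finrank_orthogonal_span_singleton hw0
    set S : K →ₗ[ℂ] K := (K.orthogonalProjectionOnto).toLinearMap ∘ₗ T ∘ₗ K.subtype with hSdef
    have hSx : ∀ x : K, ⟪x, S x⟫_ℂ = ⟪(x : E), T (x : E)⟫_ℂ := by
      intro x
      rw [hSdef]
      exact Submodule.inner_orthogonalProjectionOnto_eq_of_mem_left (K := K) x (T x)
    set g : OrthonormalBasis (Fin N) ℂ K := (stdOrthonormalBasis ℂ K).reindex (finCongr hK)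
    obtain ⟨bE, hb0, hbs⟩ := onb_cons hE hwnorm g
    have htrS : LinearMap.trace ℂ K S = (N : ℂ) * lam := by
      have h1 : LinearMap.trace ℂ E T = ⟪w, T w⟫_ℂ + ∑ j, ⟪(g j : E), T (g j : E)⟫_ℂ := by
        rw [trace_eq_sum_inner' bE, Fin.sum_univ_succ, hb0]
        congr 1
        exact Finset.sum_congr rfl fun j _ => by rw [hbs j]
      have h2 : LinearMap.trace ℂ K S = ∑ j, ⟪(g j : E), T (g j : E)⟫_ℂ := by
        rw [trace_eq_sum_inner' g]
        exact Finset.sum_congr rfl fun j _ => hSx (g j)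
      rw [hwval'] at h1
      rw [htr] at h1
      rw [h2]
      push_cast at h1
      linear_combination -h1
    obtain ⟨h, hh⟩ := ih K hK S lam htrS
    obtain ⟨f, hf0, hfs⟩ := onb_cons hE hwnorm h
    refine ⟨f, ?_⟩
    intro j
    refine Fin.cases ?_ (fun j' => ?_) j
    · rw [hf0]; exact hwval'
    · rw [hfs j', ← hSx (h j')]
      exact hh j'

lemma trace_toEuclideanLin {n : ℕ} (X : Matrix (Fin n) (Fin n) ℂ) :
    LinearMap.trace ℂ (EuclideanSpace ℂ (Fin n)) (Matrix.toEuclideanLin X) = X.trace := by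
  rw [trace_eq_sum_inner' (EuclideanSpace.basisFun (Fin n) ℂ), Matrix.trace]
  refine Finset.sum_congr rfl fun i _ => ?_
  rw [EuclideanSpace.basisFun_apply]
  rw [show ((EuclideanSpace.single i 1 : EuclideanSpace ℂ (Fin n))) =
    EuclideanSpace.single i (1 : ℂ) from rfl]
  rw [EuclideanSpace.inner_single_left]
  simp only [map_one, one_mul, Matrix.diag_apply]
  rw [Matrix.toEuclideanLin_apply]
  simp [Matrix.mulVec_single_one]

/-- For `X ∈ Mₙ(ℂ)` and `λ ∈ ℂ`, `trace X = nλ` iff there is an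
orthonormal basis `{f j}` of `ℂⁿ` with `⟨X f j, f j⟩ = λ` for every `j`. -/
theorem trace_eq_smul_iff_constant_diagonal {n : ℕ} (X : Matrix (Fin n) (Fin n) ℂ) (lam : ℂ) :
    X.trace = (n : ℂ) * lam ↔
      ∃ f : OrthonormalBasis (Fin n) ℂ (EuclideanSpace ℂ (Fin n)),
        ∀ j, (inner ℂ (f j) (Matrix.toEuclideanLin X (f j)) : ℂ) = lam := by
  constructor
  · intro htr
    exact key_lemma n (EuclideanSpace ℂ (Fin n)) finrank_euclideanSpace_fin
      (Matrix.toEuclideanLin X) lam ((trace_toEuclideanLin X).trans htr)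
  · rintro ⟨f, hf⟩
    rw [← trace_toEuclideanLin X, trace_eq_sum_inner' f (Matrix.toEuclideanLin X)]
    simp only [hf]
    rw [Finset.sum_const]
    simp [mul_comm]
end

section
/- Let ℐ be a two-sided ideal of B(H), B = B* ∈ ℐ, and A = A* ∈ B(H). Then the positive part A₊ belongs to ℐ if and only if (A+B)₊ belongs to ℐ. Similarly, A₋ ∈ ℐ if and only if (A+B)₋ ∈ ℐ. -/
set_option synthInstance.maxHeartbeats 1000000
set_option maxHeartbeats 1000000

private lemma norm_sqrt_apply_sq {H : Type*} [NormedAddCommGroup H] [InnerProductSpace ℂ H]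
    [CompleteSpace H] {S : H →L[ℂ] H} (hS : 0 ≤ S) (x : H) :
    ‖CFC.sqrt S x‖ ^ 2 = RCLike.re (inner ℂ (S x) x) := by
  have hs : 0 ≤ CFC.sqrt S := CFC.sqrt_nonneg S
  have hsa : IsSelfAdjoint (CFC.sqrt S) := IsSelfAdjoint.of_nonneg hs
  have hsym := (ContinuousLinearMap.isSelfAdjoint_iff_isSymmetric).mp hsa
  have h1 : (inner ℂ (S x) x) = inner ℂ (CFC.sqrt S x) (CFC.sqrt S x) := by
    conv_lhs => rw [← CFC.sqrt_mul_sqrt_self S hS]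
    rw [ContinuousLinearMap.mul_apply]
    exact hsym (CFC.sqrt S x) x
  rw [h1, ← inner_self_eq_norm_sq (𝕜 := ℂ)]

private lemma norm_sqrt_le {H : Type*} [NormedAddCommGroup H] [InnerProductSpace ℂ H]
    [CompleteSpace H] {S T : H →L[ℂ] H} (hS : 0 ≤ S) (hST : S ≤ T) (x : H) :
    ‖CFC.sqrt S x‖ ≤ ‖CFC.sqrt T x‖ := by
  have hT : 0 ≤ T := hS.trans hST
  have h1 := norm_sqrt_apply_sq hS x
  have h2 := norm_sqrt_apply_sq hT x
  have h3 : (T - S).IsPositive := by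
    rwa [← ContinuousLinearMap.nonneg_iff_isPositive, sub_nonneg]
  have h4 : 0 ≤ RCLike.re (inner ℂ ((T - S) x) x) := h3.re_inner_nonneg_left x
  simp only [ContinuousLinearMap.sub_apply, inner_sub_left, map_sub] at h4
  have : ‖CFC.sqrt S x‖ ^ 2 ≤ ‖CFC.sqrt T x‖ ^ 2 := by rw [h1, h2]; linarith
  nlinarith [norm_nonneg (CFC.sqrt S x), norm_nonneg (CFC.sqrt T x)]

/-- Two-sided ideals of B(H) are hereditary: Douglas factorization `S = C T C*`. -/
private lemma hereditary {H : Type*} [NormedAddCommGroup H] [InnerProductSpace ℂ H]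
    [CompleteSpace H] (I : TwoSidedIdeal (H →L[ℂ] H)) {S T : H →L[ℂ] H}
    (hS : 0 ≤ S) (hST : S ≤ T) (hT : T ∈ I) : S ∈ I := by
  have hT0 : 0 ≤ T := hS.trans hST
  set s := CFC.sqrt S with hs_def
  set t := CFC.sqrt T with ht_def
  have hs : 0 ≤ s := CFC.sqrt_nonneg S
  have ht : 0 ≤ t := CFC.sqrt_nonneg T
  have hss : s * s = S := CFC.sqrt_mul_sqrt_self S hS
  have htt : t * t = T := CFC.sqrt_mul_sqrt_self T hT0
  have hnorm : ∀ x, ‖s x‖ ≤ ‖t x‖ := norm_sqrt_le hS hST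
  set tl : H →ₗ[ℂ] H := (t : H →ₗ[ℂ] H) with htl
  set sl : H →ₗ[ℂ] H := (s : H →ₗ[ℂ] H) with hsl
  have hker : LinearMap.ker tl ≤ LinearMap.ker sl := by
    intro x hx
    rw [LinearMap.mem_ker] at hx ⊢
    have := hnorm x
    rw [show tl x = t x from rfl] at hx
    rw [hx, norm_zero] at this
    have : ‖s x‖ = 0 := le_antisymm this (norm_nonneg _)
    simpa [norm_eq_zero, hsl] using this
  set φ₀ : (H ⧸ LinearMap.ker tl) →ₗ[ℂ] H := (LinearMap.ker tl).liftQ sl hker with hφ₀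
  set e := tl.quotKerEquivRange with he
  set φ₁ : LinearMap.range tl →ₗ[ℂ] H := φ₀.comp e.symm.toLinearMap with hφ₁def
  have hφ₁ : ∀ (x : H) (hm : tl x ∈ LinearMap.range tl), φ₁ ⟨tl x, hm⟩ = s x := by
    intro x hm
    have h1 : e (Submodule.Quotient.mk x) = ⟨tl x, hm⟩ :=
      Subtype.ext (tl.quotKerEquivRange_apply_mk x)
    have h2 : e.symm ⟨tl x, hm⟩ = Submodule.Quotient.mk x := by
      rw [LinearEquiv.symm_apply_eq, h1]
    simp only [hφ₁def, LinearMap.comp_apply, LinearEquiv.coe_toLinearMap, h2]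
    rfl
  have hφ₁bound : ∀ y : LinearMap.range tl, ‖φ₁ y‖ ≤ 1 * ‖y‖ := by
    rintro ⟨y, hy⟩
    obtain ⟨x, rfl⟩ := id hy
    rw [one_mul, hφ₁ x hy]
    exact hnorm x
  set φ : (LinearMap.range tl) →L[ℂ] H := φ₁.mkContinuous 1 hφ₁bound with hφ
  set K := (LinearMap.range tl).topologicalClosure with hK
  set j : (LinearMap.range tl) →ₗ[ℂ] K :=
    Submodule.inclusion (Submodule.le_topologicalClosure _) with hj
  have hjnorm : ∀ y : LinearMap.range tl, ‖j y‖ = ‖y‖ := fun y => rfl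
  set jc : (LinearMap.range tl) →L[ℂ] K := j.mkContinuous 1 (fun y => by rw [hjnorm, one_mul])
    with hjc
  have h_dense : DenseRange jc := by
    intro y
    have hy : (y : H) ∈ closure ((LinearMap.range tl : Submodule ℂ H) : Set H) := by
      exact y.2
    rw [mem_closure_iff_seq_limit] at hy
    obtain ⟨u, hu, hlim⟩ := hy
    rw [mem_closure_iff_seq_limit]
    refine ⟨fun n => jc ⟨u n, hu n⟩, fun n => ⟨⟨u n, hu n⟩, rfl⟩, ?_⟩
    rw [tendsto_subtype_rng]
    exact hlim
  have h_ind : IsUniformInducing jc :=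
    (ContinuousLinearMap.isUniformEmbedding_of_bound (K := 1) jc
      (fun y => by rw [NNReal.coe_one, one_mul]; exact le_of_eq (hjnorm y).symm)).isUniformInducing
  set ψ : K →L[ℂ] H := φ.extend jc with hψ
  set C : H →L[ℂ] H := ψ.comp K.orthogonalProjectionOnto with hC
  have hts : IsSelfAdjoint t := IsSelfAdjoint.of_nonneg ht
  have hss' : IsSelfAdjoint s := IsSelfAdjoint.of_nonneg hs
  have hCt : C * t = s := by
    ext x
    have hmem : t x ∈ K := Submodule.le_topologicalClosure _ (LinearMap.mem_range_self tl x)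
    have h1 : K.orthogonalProjectionOnto (t x) = ⟨t x, hmem⟩ :=
      Submodule.orthogonalProjectionOnto_mem_subspace_eq_self (⟨t x, hmem⟩ : K)
    have h2 : (⟨t x, hmem⟩ : K) = jc ⟨t x, LinearMap.mem_range_self tl x⟩ := rfl
    calc (C * t) x = ψ (K.orthogonalProjectionOnto (t x)) := rfl
    _ = ψ (jc ⟨t x, LinearMap.mem_range_self tl x⟩) := by rw [h1, h2]
    _ = φ ⟨t x, LinearMap.mem_range_self tl x⟩ := ContinuousLinearMap.extend_eq _ h_dense h_ind _
    _ = s x := hφ₁ x _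
  have h2 : t * star C = s := by
    have h3 := congrArg star hCt
    rwa [star_mul, hts.star_eq, hss'.star_eq] at h3
  have hfact : S = C * T * star C := by
    calc S = s * s := hss.symm
    _ = (C * t) * (t * star C) := by rw [hCt, h2]
    _ = C * (t * t) * star C := by simp only [mul_assoc]
    _ = C * T * star C := by rw [htt]
  rw [hfact]
  exact I.mul_mem_right _ _ (I.mul_mem_left _ _ hT)

private lemma key_lemma_s4 {H : Type*} [NormedAddCommGroup H] [InnerProductSpace ℂ H]
    [CompleteSpace H] (I : TwoSidedIdeal (H →L[ℂ] H)) (A B : H →L[ℂ] H) (hBI : B ∈ I)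
    (Ap Am Cp Cm : H →L[ℂ] H)
    (hAp : Ap.IsPositive) (hAm : Am.IsPositive) (hAd : A = Ap - Am) (hAo : Ap ∘L Am = 0)
    (hCm : Cm.IsPositive) (hCd : A + B = Cp - Cm) (hCpI : Cp ∈ I) : Ap ∈ I := by
  set K := (LinearMap.range (Ap : H →ₗ[ℂ] H)).topologicalClosure with hKdef
  set P : H →L[ℂ] H := K.subtypeL ∘L K.orthogonalProjectionOnto with hPdef
  have hPsa : IsSelfAdjoint P := isSelfAdjoint_starProjection K
  have hPK : ∀ y, (hy : y ∈ K) → P y = y := by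
    intro y hy
    have h1 : K.orthogonalProjectionOnto y = ⟨y, hy⟩ :=
      Submodule.orthogonalProjectionOnto_mem_subspace_eq_self (⟨y, hy⟩ : K)
    show (K.orthogonalProjectionOnto y : H) = y
    rw [h1]
  have hPAp : P * Ap = Ap := by
    ext x
    exact hPK (Ap x) (Submodule.le_topologicalClosure _
      (LinearMap.mem_range_self (Ap : H →ₗ[ℂ] H) x))
  have hApP : Ap * P = Ap := by
    have h := congrArg star hPAp
    rwa [star_mul, hPsa.star_eq, hAp.isSelfAdjoint.star_eq] at h
  have hAmAp : Am * Ap = 0 := by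
    have h := congrArg star (show Ap * Am = 0 from hAo)
    rwa [star_mul, hAm.isSelfAdjoint.star_eq, hAp.isSelfAdjoint.star_eq, star_zero] at h
  have hAmP : Am * P = 0 := by
    have h1 : LinearMap.range (Ap : H →ₗ[ℂ] H) ≤ LinearMap.ker (Am : H →ₗ[ℂ] H) := by
      rintro y ⟨x, rfl⟩
      show Am (Ap x) = 0
      calc Am (Ap x) = (Am * Ap) x := rfl
      _ = 0 := by rw [hAmAp]; rfl
    have h2 : K ≤ LinearMap.ker (Am : H →ₗ[ℂ] H) :=
      Submodule.topologicalClosure_minimal _ h1 (ContinuousLinearMap.isClosed_ker Am)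
    ext x
    have h3 : P x ∈ K := (K.orthogonalProjectionOnto x).2
    exact h2 h3
  have hPAm : P * Am = 0 := by
    have h := congrArg star hAmP
    rwa [star_mul, hPsa.star_eq, hAm.isSelfAdjoint.star_eq, star_zero] at h
  have hPAP : P * A * P = Ap := by
    rw [hAd]
    calc P * (Ap - Am) * P = (P * Ap) * P - (P * Am) * P := by rw [mul_sub, sub_mul]
    _ = Ap := by rw [hPAp, hPAm, zero_mul, sub_zero, hApP]
  have h0Cm : (0 : H →L[ℂ] H) ≤ Cm := (ContinuousLinearMap.nonneg_iff_isPositive Cm).mpr hCm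
  have hle : A ≤ Cp - B := by
    rw [← sub_nonneg]
    have h' : Cp = A + B + Cm := sub_eq_iff_eq_add.mp hCd.symm
    have h'' : Cp - B - A = Cm := by rw [h']; abel
    rwa [h'']
  have hconj : Ap ≤ P * (Cp - B) * P := by
    have h := IsSelfAdjoint.conjugate_le_conjugate hle hPsa
    rwa [hPAP] at h
  exact hereditary I ((ContinuousLinearMap.nonneg_iff_isPositive Ap).mpr hAp) hconj
    (I.mul_mem_right _ _ (I.mul_mem_left _ _ (I.sub_mem hCpI hBI)))

/-- Let `I` be a two-sided ideal of `B(H)`, `B = B* ∈ I`, `A = A* ∈ В(H)`.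
Then `A₊ ∈ I ↔ (A+B)₊ ∈ I`, and similarly `A₋ ∈ I ↔ (A+B)₋ ∈ I`. The positive and
negative parts are specified by decompositions into positive operators with product zero. -/
theorem posPart_mem_ideal_iff {H : Type*} [NormedAddCommGroup H] [InnerProductSpace ℂ H]
    [CompleteSpace H] [TopologicalSpace.SeparableSpace H]
    (I : TwoSidedIdeal (H →L[ℂ] H))
    (A B : H →L[ℂ] H) (hA : IsSelfAdjoint A) (hB : IsSelfAdjoint B) (hBI : B ∈ I)
    (Ap Am Cp Cm : H →L[ℂ] H)
    (hAp : Ap.IsPositive) (hAm : Am.IsPositive) (hAd : A = Ap - Am) (hAo : Ap ∘L Am = 0)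
    (hCp : Cp.IsPositive) (hCm : Cm.IsPositive) (hCd : A + B = Cp - Cm) (hCo : Cp ∘L Cm = 0) :
    (Ap ∈ I ↔ Cp ∈ I) ∧ (Am ∈ I ↔ Cm ∈ I) := by
  have hAo' : Am ∘L Ap = 0 := by
    have h := congrArg star (show Ap * Am = 0 from hAo)
    rwa [star_mul, hAm.isSelfAdjoint.star_eq, hAp.isSelfAdjoint.star_eq, star_zero] at h
  have hCo' : Cm ∘L Cp = 0 := by
    have h := congrArg star (show Cp * Cm = 0 from hCo)
    rwa [star_mul, hCm.isSelfAdjoint.star_eq, hCp.isSelfAdjoint.star_eq, star_zero] at h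
  refine ⟨⟨fun h => ?_, fun h => ?_⟩, ⟨fun h => ?_, fun h => ?_⟩⟩
  · -- Ap ∈ I → Cp ∈ I
    exact key_lemma_s4 I (A + B) (-B) (I.neg_mem hBI) Cp Cm Ap Am hCp hCm hCd hCo hAm
      (by rw [hAd]; abel) h
  · -- Cp ∈ I → Ap ∈ I
    exact key_lemma_s4 I A B hBI Ap Am Cp Cm hAp hAm hAd hAo hCm hCd h
  · -- Am ∈ I → Cm ∈ I
    exact key_lemma_s4 I (-(A + B)) B hBI Cm Cp Am Ap hCm hCp (by rw [hCd]; abel) hCo' hAp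
      (by rw [hAd]; abel) h
  · -- Cm ∈ I → Am ∈ I
    exact key_lemma_s4 I (-A) (-B) (I.neg_mem hBI) Am Ap Cm Cp hAm hAp (by rw [hAd]; abel) hAo'
      hCp (by rw [← neg_add, hCd]; abel) h
end

section
/- For every d ∈ ℂ there exists an idempotent D ∈ M₂(ℂ) with operator norm ‖D‖ ≤ 6|d| + 4 whose diagonal entries are 3d − 1 and −3d + 2. -/
open scoped Matrix

/-- For every `d ∈ ℂ` there is an idempotent `D ∈ M₂(ℂ)` with operator
norm `‖D‖ ≤ 6|d| + 4` whose diagonal entries are `3d − 1` and `−3d + 2`. -/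
theorem exists_two_by_two_idempotent_with_diagonal (d : ℂ) :
    ∃ D : Matrix (Fin 2) (Fin 2) ℂ, D * D = D ∧
      ‖(Matrix.toEuclideanCLM (𝕜 := ℂ) D : EuclideanSpace ℂ (Fin 2) →L[ℂ] EuclideanSpace ℂ (Fin 2))‖
        ≤ 6 * ‖d‖ + 4 ∧
      D 0 0 = 3 * d - 1 ∧ D 1 1 = -3 * d + 2 := by
  set a : ℂ := 3 * d - 1 with ha
  refine ⟨!![a, -a; a - 1, 1 - a], ?_, ?_, by simp, by simp [ha]; ring⟩
  · ext i j
    fin_cases i <;> fin_cases j <;>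
      simp [Matrix.mul_apply, Fin.sum_univ_two] <;> ring
  · apply ContinuousLinearMap.opNorm_le_bound _ (by positivity)
    intro x
    have hx : ∀ i, (Matrix.toEuclideanCLM (𝕜 := ℂ) !![a, -a; a - 1, 1 - a] x) i =
        (!![a, -a; a - 1, 1 - a]).mulVec (WithLp.equiv 2 _ x) i := fun i =>
      congrFun (Matrix.ofLp_toEuclideanCLM (𝕜 := ℂ) _ x) i
    have e0 : (Matrix.toEuclideanCLM (𝕜 := ℂ) !![a, -a; a - 1, 1 - a] x) 0
        = a * (x 0 - x 1) := by
      rw [hx]; simp [Matrix.mulVec, dotProduct, Fin.sum_univ_two]; ring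
    have e1 : (Matrix.toEuclideanCLM (𝕜 := ℂ) !![a, -a; a - 1, 1 - a] x) 1
        = (a - 1) * (x 0 - x 1) := by
      rw [hx]; simp [Matrix.mulVec, dotProduct, Fin.sum_univ_two]; ring
    have hnorm : ‖Matrix.toEuclideanCLM (𝕜 := ℂ) !![a, -a; a - 1, 1 - a] x‖ ^ 2
        = ‖a * (x 0 - x 1)‖ ^ 2 + ‖(a - 1) * (x 0 - x 1)‖ ^ 2 := by
      rw [EuclideanSpace.norm_eq, Real.sq_sqrt (by positivity), Fin.sum_univ_two, e0, e1]
    have hxnorm : ‖x‖ ^ 2 = ‖x 0‖ ^ 2 + ‖x 1‖ ^ 2 := by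
      rw [EuclideanSpace.norm_eq, Real.sq_sqrt (by positivity), Fin.sum_univ_two]
    have hd : (0:ℝ) ≤ ‖d‖ := norm_nonneg d
    have h1 : ‖a‖ ≤ 3 * ‖d‖ + 1 := by
      calc ‖a‖ ≤ ‖3 * d‖ + ‖(1 : ℂ)‖ := norm_sub_le _ _
      _ = 3 * ‖d‖ + 1 := by simp
    have h2 : ‖a - 1‖ ≤ 3 * ‖d‖ + 2 := by
      have h : a - 1 = 3 * d - 2 := by rw [ha]; ring
      rw [h]
      calc ‖3 * d - 2‖ ≤ ‖3 * d‖ + ‖(2 : ℂ)‖ := norm_sub_le _ _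
      _ = 3 * ‖d‖ + 2 := by simp
    have p1 : ‖a‖ ^ 2 ≤ (3 * ‖d‖ + 1) ^ 2 :=
      pow_le_pow_left₀ (norm_nonneg _) h1 2
    have p2 : ‖a - 1‖ ^ 2 ≤ (3 * ‖d‖ + 2) ^ 2 :=
      pow_le_pow_left₀ (norm_nonneg _) h2 2
    have h3 : ‖x 0 - x 1‖ ^ 2 ≤ 2 * (‖x 0‖ ^ 2 + ‖x 1‖ ^ 2) := by
      have h := pow_le_pow_left₀ (norm_nonneg _) (norm_sub_le (x 0) (x 1)) 2
      nlinarith [sq_nonneg (‖x 0‖ - ‖x 1‖)]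
    have key : ‖Matrix.toEuclideanCLM (𝕜 := ℂ) !![a, -a; a - 1, 1 - a] x‖ ^ 2
        ≤ ((6 * ‖d‖ + 4) * ‖x‖) ^ 2 := by
      rw [hnorm, mul_pow, hxnorm]
      simp only [norm_mul, mul_pow]
      nlinarith [mul_le_mul_of_nonneg_right p1 (sq_nonneg ‖x 0 - x 1‖),
        mul_le_mul_of_nonneg_right p2 (sq_nonneg ‖x 0 - x 1‖),
        mul_le_mul_of_nonneg_left h3
          (by positivity : (0:ℝ) ≤ (3 * ‖d‖ + 1) ^ 2 + (3 * ‖d‖ + 2) ^ 2),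
        mul_nonneg hd (add_nonneg (sq_nonneg ‖x 0‖) (sq_nonneg ‖x 1‖)),
        mul_nonneg (mul_nonneg hd hd) (add_nonneg (sq_nonneg ‖x 0‖) (sq_nonneg ‖x 1‖))]
    exact (pow_le_pow_iff_left₀ (norm_nonneg _) (by positivity) two_ne_zero).mp key
end

section
/- If ⟨dⱼ⟩ is an absolutely summable sequence of complex numbers with Σⱼ dⱼ = 1, then there exists a rank-one idempotent operator D on a separable Hilbert space H and an orthonormal basis {eⱼ} such that ⟨D eⱼ, eⱼ⟩ = dⱼ for all j. Conversely, the diagonal of any rank-one idempotent with respect to any orthonormal basis is absolutely summable with sum 1. -/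
open scoped ComplexConjugate ENNReal

set_option maxHeartbeats 1000000 in
/-- An absolutely summable sequence `⟨d j⟩` with `Σ d j = 1` is the diagonal
of a rank-one idempotent in some orthonormal basis of a separable infinite-dimensional
Hilbert space; conversely, the diagonal of any rank-one idempotent in any orthonormal
basis is absolutely summable with sum `1`. -/
theorem rankOne_idempotent_diagonal {H : Type*} [NormedAddCommGroup H] [InnerProductSpace ℂ H]
    [CompleteSpace H] (e₀ : HilbertBasis ℕ ℂ H)
    (d : ℕ → ℂ) (hd : Summable fun j => ‖d j‖) :
    ((∑' j, d j) = 1 →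
      ∃ (D : H →L[ℂ] H) (x y : H), x ≠ 0 ∧ y ≠ 0 ∧ (∀ z, D z = (inner ℂ x z : ℂ) • y) ∧
        D ∘L D = D ∧ ∃ e : HilbertBasis ℕ ℂ H, ∀ j, (inner ℂ (e j) (D (e j)) : ℂ) = d j) ∧
    (∀ (D : H →L[ℂ] H) (x y : H), x ≠ 0 → y ≠ 0 → (∀ z, D z = (inner ℂ x z : ℂ) • y) →
      D ∘L D = D → ∀ e : HilbertBasis ℕ ℂ H,
        (Summable fun j => ‖(inner ℂ (e j) (D (e j)) : ℂ)‖) ∧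
        (∑' j, (inner ℂ (e j) (D (e j)) : ℂ)) = 1) := by
  constructor
  · intro hsum
    -- square roots
    set s : ℕ → ℂ := fun j => (d j) ^ (1/2 : ℂ) with hs
    have hss : ∀ j, s j * s j = d j := by
      intro j
      by_cases h : d j = 0
      · simp [hs, h, Complex.zero_cpow (by norm_num : (1/2 : ℂ) ≠ 0)]
      · rw [hs]
        rw [← Complex.cpow_add _ _ h]
        norm_num
    have hns : ∀ j, ‖s j‖ ^ 2 = ‖d j‖ := by
      intro j
      have : ‖s j‖ * ‖s j‖ = ‖d j‖ := by
        rw [← norm_mul, hss]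
      rw [sq, this]
    have hmem : Memℓp s 2 := by
      apply memℓp_gen
      have : (2 : ℝ≥0∞).toReal = 2 := by norm_num
      rw [this]
      convert hd using 2 with j
      rw [show ((2:ℝ)) = ((2:ℕ):ℝ) by norm_num, Real.rpow_natCast]
      exact hns j
    have hmem' : Memℓp (fun j => conj (s j)) 2 := by
      apply memℓp_gen
      have : (2 : ℝ≥0∞).toReal = 2 := by norm_num
      rw [this]
      convert hd using 2 with j
      rw [show ((2:ℝ)) = ((2:ℕ):ℝ) by norm_num, Real.rpow_natCast, RCLike.norm_conj]
      exact hns j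
    set x : H := e₀.repr.symm ⟨fun j => conj (s j), hmem'⟩ with hx
    set y : H := e₀.repr.symm ⟨s, hmem⟩ with hy
    have hreprx : ∀ j, e₀.repr x j = conj (s j) := by
      intro j; rw [hx, LinearIsometryEquiv.apply_symm_apply]
    have hrepry : ∀ j, e₀.repr y j = s j := by
      intro j; rw [hy, LinearIsometryEquiv.apply_symm_apply]
    have hinnerex : ∀ j, (inner ℂ (e₀ j) x : ℂ) = conj (s j) := by
      intro j
      have h := hreprx j
      rwa [e₀.repr_apply_apply] at h
    have hinnerxe : ∀ j, (inner ℂ x (e₀ j) : ℂ) = s j := by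
      intro j
      rw [← inner_conj_symm, hinnerex, Complex.conj_conj]
    have hinnerey : ∀ j, (inner ℂ (e₀ j) y : ℂ) = s j := by
      intro j
      have h := hrepry j
      rwa [e₀.repr_apply_apply] at h
    -- some d j ≠ 0
    obtain ⟨j₀, hj₀⟩ : ∃ j, d j ≠ 0 := by
      by_contra h
      push_neg at h
      simp [h] at hsum
    have hsj₀ : s j₀ ≠ 0 := fun h => hj₀ (by rw [← hss j₀, h, mul_zero])
    have hxne : x ≠ 0 := by
      intro h
      apply hsj₀
      have := hinnerxe j₀
      rw [h, inner_zero_left] at this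
      exact this.symm
    have hyne : y ≠ 0 := by
      intro h
      apply hsj₀
      have := hinnerey j₀
      rw [h, inner_zero_right] at this
      exact this.symm
    have hxy : (inner ℂ x y : ℂ) = 1 := by
      rw [← e₀.tsum_inner_mul_inner x y]
      calc ∑' j, (inner ℂ x (e₀ j) : ℂ) * inner ℂ (e₀ j) y
          = ∑' j, d j := by
            congr 1; ext j; rw [hinnerxe, hinnerey, hss]
        _ = 1 := hsum
    refine ⟨(innerSL ℂ x).smulRight y, x, y, hxne, hyne, fun z => rfl, ?_, e₀, ?_⟩
    · ext z
      simp only [ContinuousLinearMap.comp_apply, ContinuousLinearMap.smulRight_apply,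
        innerSL_apply_apply, inner_smul_right, hxy, mul_one]
    · intro j
      simp only [ContinuousLinearMap.smulRight_apply, innerSL_apply_apply, inner_smul_right,
        hinnerxe, hinnerey, hss]
  · intro D x y hxne hyne hD hD2 e
    have hxy : (inner ℂ x y : ℂ) = 1 := by
      have h1 : D (D x) = D x := by rw [← ContinuousLinearMap.comp_apply, hD2]
      simp only [hD, inner_smul_right] at h1
      have h2 : ((inner ℂ x x : ℂ) * inner ℂ x y - (inner ℂ x x : ℂ)) • y = 0 := by
        rw [sub_smul, h1, sub_self]
      rcases smul_eq_zero.mp h2 with h | h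
      · have hxx : (inner ℂ x x : ℂ) ≠ 0 := inner_self_ne_zero.mpr hxne
        have h3 : (inner ℂ x x : ℂ) * ((inner ℂ x y : ℂ) - 1) = 0 := by ring_nf; linear_combination h
        rcases mul_eq_zero.mp h3 with h4 | h4
        · exact absurd h4 hxx
        · exact sub_eq_zero.mp h4
      · exact absurd h hyne
    have hdiag : ∀ j, (inner ℂ (e j) (D (e j)) : ℂ) = (inner ℂ x (e j) : ℂ) * inner ℂ (e j) y := by
      intro j
      rw [hD, inner_smul_right, mul_comm]
    constructor
    · have hsx : Summable fun j => ‖(inner ℂ x (e j) : ℂ)‖ ^ 2 := by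
        have h0 : (0:ℝ) < (2 : ℝ≥0∞).toReal := by norm_num
        have := (lp.memℓp (e.repr x)).summable h0
        have h2 : (2 : ℝ≥0∞).toReal = 2 := by norm_num
        rw [h2] at this
        apply this.congr
        intro j
        rw [show ((2:ℝ)) = ((2:ℕ):ℝ) by norm_num, Real.rpow_natCast,
          e.repr_apply_apply, ← inner_conj_symm, RCLike.norm_conj]
      have hsy : Summable fun j => ‖(inner ℂ (e j) y : ℂ)‖ ^ 2 := by
        have h0 : (0:ℝ) < (2 : ℝ≥0∞).toReal := by norm_num
        have := (lp.memℓp (e.repr y)).summable h0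
        have h2 : (2 : ℝ≥0∞).toReal = 2 := by norm_num
        rw [h2] at this
        apply this.congr
        intro j
        rw [show ((2:ℝ)) = ((2:ℕ):ℝ) by norm_num, Real.rpow_natCast,
          e.repr_apply_apply]
      refine Summable.of_nonneg_of_le (fun j => norm_nonneg _) (fun j => ?_)
        ((hsx.add hsy).div_const 2)
      rw [hdiag, norm_mul]
      nlinarith [sq_nonneg (‖(inner ℂ x (e j) : ℂ)‖ - ‖(inner ℂ (e j) y : ℂ)‖),
        norm_nonneg (inner ℂ x (e j) : ℂ), norm_nonneg (inner ℂ (e j) y : ℂ)]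
    · calc ∑' j, (inner ℂ (e j) (D (e j)) : ℂ)
          = ∑' j, (inner ℂ x (e j) : ℂ) * inner ℂ (e j) y := by
            congr 1; ext j; exact hdiag j
        _ = inner ℂ x y := e.tsum_inner_mul_inner x y
        _ = 1 := hxy
end

section
/- A finite sequence ⟨d₁,…,dₙ⟩ ∈ ℂⁿ is the diagonal of some idempotent matrix D ∈ Mₙ(ℂ) if and only if: all dₖ = 0, or all dₖ = 1, or Σₖ dₖ ∈ {1, 2, …, n−1}. -/
open Matrix

def Realizable {ι : Type*} [Fintype ι] [DecidableEq ι] (d : ι → ℂ) : Prop :=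
  ∃ D : Matrix ι ι ℂ, D * D = D ∧ ∀ k, D k k = d k

lemma realizable_reindex {ι κ : Type*} [Fintype ι] [DecidableEq ι] [Fintype κ] [DecidableEq κ]
    (e : ι ≃ κ) (d : κ → ℂ) (h : Realizable d) : Realizable (d ∘ e) := by
  obtain ⟨D, h1, h2⟩ := h
  refine ⟨D.submatrix e e, ?_, fun k => h2 (e k)⟩
  rw [Matrix.submatrix_mul_equiv D D _ _ e, h1]

lemma exists_perm {N : ℕ} (p q i j : Fin N) (hpq : p ≠ q) (hij : i ≠ j) :
    ∃ σ : Equiv.Perm (Fin N), σ p = i ∧ σ q = j := by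
  refine ⟨(Equiv.swap p i).trans (Equiv.swap ((Equiv.swap p i) q) j), ?_, ?_⟩
  · simp only [Equiv.trans_apply, Equiv.swap_apply_left]
    refine Equiv.swap_apply_of_ne_of_ne ?_ hij
    intro h
    have : (Equiv.swap p i) p = (Equiv.swap p i) q := by
      rw [Equiv.swap_apply_left]; exact h
    exact hpq (Equiv.injective _ this)
  · simp [Equiv.trans_apply, Equiv.swap_apply_left]

lemma expand {N : ℕ} (w : Fin N → ℂ) (a b ε : ℂ) (hε : ε * ε = ε) (h2 : a + b ≠ 2 * ε)
    (H : Realizable (Sum.elim w (fun _ : Fin 1 => a + b - ε))) :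
    Realizable (Sum.elim w ![a, b] : Fin N ⊕ Fin 2 → ℂ) := by
  obtain ⟨E, hEE, hEd⟩ := H
  set c : ℂ := a + b - ε with hc
  have hδ0 : (2 * ε - a - b) ≠ 0 := fun h => h2 (by linear_combination -h)
  set F := E.toBlocks₁₁ with hF
  set u := E.toBlocks₁₂ with hu
  set v := E.toBlocks₂₁ with hv
  set w₂ := E.toBlocks₂₂ with hw
  have hE : fromBlocks F u v w₂ = E := fromBlocks_toBlocks E
  have hw₂ : w₂ = c • (1 : Matrix (Fin 1) (Fin 1) ℂ) := by
    ext i j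
    fin_cases i; fin_cases j
    simpa [hw, toBlocks₂₂] using hEd (Sum.inr 0)
  rw [← hE] at hEE
  rw [fromBlocks_multiply] at hEE
  have e11 : F * F + u * v = F := by
    have := congrArg Matrix.toBlocks₁₁ hEE; simpa [Matrix.toBlocks_fromBlocks₁₁] using this
  have e12 : F * u + u * w₂ = u := by
    have := congrArg Matrix.toBlocks₁₂ hEE; simpa [Matrix.toBlocks_fromBlocks₁₂] using this
  have e21 : v * F + w₂ * v = v := by
    have := congrArg Matrix.toBlocks₂₁ hEE; simpa [Matrix.toBlocks_fromBlocks₂₁] using this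
  have e22 : v * u + w₂ * w₂ = w₂ := by
    have := congrArg Matrix.toBlocks₂₂ hEE; simpa [Matrix.toBlocks_fromBlocks₂₂] using this
  set A : Matrix (Fin 2) (Fin 2) ℂ := !![c, 0; 0, ε] with hA
  set s : Matrix (Fin 2) (Fin 2) ℂ := !![1, 1; b - ε, ε - a] with hs
  set s' : Matrix (Fin 2) (Fin 2) ℂ := (2 * ε - a - b)⁻¹ • !![ε - a, -1; ε - b, 1] with hs'
  set R : Matrix (Fin 1) (Fin 2) ℂ := !![1, 0] with hR
  set Rt : Matrix (Fin 2) (Fin 1) ℂ := !![1; 0] with hRt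
  have hs's : s' * s = 1 := by
    ext i j
    fin_cases i <;> fin_cases j <;>
      (simp [hs, hs', Matrix.mul_apply, Fin.sum_univ_succ] <;> field_simp <;> ring)
  have hRA : R * A = c • R := by
    ext i j
    fin_cases i <;> fin_cases j <;>
      simp [hR, hA, Matrix.mul_apply, Fin.sum_univ_succ]
  have hARt : A * Rt = c • Rt := by
    ext i j
    fin_cases i <;> fin_cases j <;>
      simp [hRt, hA, Matrix.mul_apply, Fin.sum_univ_succ]
  have hRtR : Rt * R = !![1, 0; 0, 0] := by
    ext i j
    fin_cases i <;> fin_cases j <;> simp [hRt, hR, Matrix.mul_apply, Fin.sum_univ_succ]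
  have hAA : A * A = A - (c - c * c) • (Rt * R) := by
    rw [hRtR]
    ext i j
    fin_cases i <;> fin_cases j <;>
      simp [hA, Matrix.mul_apply, Fin.sum_univ_succ] <;>
      first
      | ring1
      | linear_combination hε
  have hRRt : R * Rt = (1 : Matrix (Fin 1) (Fin 1) ℂ) := by
    ext i j
    fin_cases i <;> fin_cases j <;>
      simp [hRt, hR, Matrix.mul_apply, Fin.sum_univ_succ]
  set M : Matrix (Fin 2) (Fin 2) ℂ := s * A * s' with hM
  set X : Matrix (Fin 1) (Fin 2) ℂ := R * s' with hX
  set Y : Matrix (Fin 2) (Fin 1) ℂ := s * Rt with hY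
  have hXY : X * Y = 1 := by
    rw [hX, hY, Matrix.mul_assoc, ← Matrix.mul_assoc s' s, hs's, Matrix.one_mul, hRRt]
  have hXM : X * M = c • X := by
    rw [hX, hM]
    calc R * s' * (s * A * s') = R * A * s' := by
          rw [show s * A * s' = s * (A * s') from Matrix.mul_assoc _ _ _, Matrix.mul_assoc,
            ← Matrix.mul_assoc s' s, hs's, Matrix.one_mul, ← Matrix.mul_assoc]
      _ = c • (R * s') := by rw [hRA, Matrix.smul_mul]
  have hMY : M * Y = c • Y := by
    rw [hY, hM]
    calc s * A * s' * (s * Rt) = s * (A * Rt) := by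
          rw [Matrix.mul_assoc, ← Matrix.mul_assoc s' s, hs's, Matrix.one_mul,
            Matrix.mul_assoc]
      _ = c • (s * Rt) := by rw [hARt, Matrix.mul_smul]
  have hMM : M * M = M - (c - c * c) • (Y * X) := by
    rw [hM, hY, hX]
    rw [show s * A * s' * (s * A * s') = s * (A * (s' * s) * A) * s' by
      simp [Matrix.mul_assoc]]
    rw [hs's, Matrix.mul_one, hAA]
    simp only [Matrix.mul_sub, Matrix.sub_mul, Matrix.mul_smul, Matrix.smul_mul,
      Matrix.mul_assoc]
  have hcu : u * w₂ = c • u := by rw [hw₂, Matrix.mul_smul, Matrix.mul_one]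
  have hcv : w₂ * v = c • v := by rw [hw₂, Matrix.smul_mul, Matrix.one_mul]
  have hvu : v * u = (c - c * c) • (1 : Matrix (Fin 1) (Fin 1) ℂ) := by
    have h' : v * u = w₂ - w₂ * w₂ := eq_sub_of_add_eq e22
    rw [h', hw₂, Matrix.smul_mul, Matrix.mul_smul, Matrix.mul_one, smul_smul, ← sub_smul]
  refine ⟨fromBlocks F (u * X) (Y * v) M, ?_, ?_⟩
  · rw [fromBlocks_multiply]
    have b11 : F * F + u * X * (Y * v) = F := by
      rw [Matrix.mul_assoc u, ← Matrix.mul_assoc X, hXY, Matrix.one_mul]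
      exact e11
    have b12 : F * (u * X) + u * X * M = u * X := by
      have h' : u * X * M = (u * w₂) * X := by
        rw [Matrix.mul_assoc u X M, hXM, hcu, Matrix.mul_smul, Matrix.smul_mul]
      rw [h', ← Matrix.mul_assoc F u X, ← Matrix.add_mul, e12]
    have b21 : Y * v * F + M * (Y * v) = Y * v := by
      have h' : M * (Y * v) = Y * (w₂ * v) := by
        rw [← Matrix.mul_assoc M Y v, hMY, hcv, Matrix.smul_mul, Matrix.mul_smul]
      rw [h', Matrix.mul_assoc Y v F, ← Matrix.mul_add, e21]
    have b22 : Y * v * (u * X) + M * M = M := by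
      have h' : Y * v * (u * X) = (c - c * c) • (Y * X) := by
        rw [show Y * v * (u * X) = Y * (v * u) * X by simp [Matrix.mul_assoc], hvu,
          Matrix.mul_smul, Matrix.mul_one, Matrix.smul_mul]
      rw [h', hMM]
      abel
    rw [b11, b12, b21, b22]
  · rintro (k | i)
    · simpa [hF, Matrix.toBlocks₁₁] using hEd (Sum.inl k)
    · have hM' : ∀ i, M i i = ![a, b] i := by
        intro i
        fin_cases i <;>
          simp [hM, hs, hA, hs', Matrix.mul_apply, Fin.sum_univ_succ, hc] <;>
          field_simp [show ε * 2 - a - b ≠ 0 from fun h => hδ0 (by linear_combination h)] <;> ring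
      simpa using hM' i

lemma all_eq {N : ℕ} (d : Fin (N + 2) → ℂ) (hN : 1 ≤ N) (t : ℂ)
    (h : ∀ i j, i ≠ j → d i + d j = t + t) : ∀ i, d i = t := by
  intro i
  let j : Fin (N + 2) := if i.val = 0 then ⟨1, by omega⟩ else ⟨0, by omega⟩
  let k : Fin (N + 2) := if i.val = 2 then ⟨1, by omega⟩ else ⟨2, by omega⟩
  have hij : i ≠ j := by
    simp only [j]; split <;> simp only [ne_eq, Fin.ext_iff] <;> omega
  have hik : i ≠ k := by
    simp only [k]; split <;> simp only [ne_eq, Fin.ext_iff] <;> omega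
  have hjk : j ≠ k := by
    simp only [j, k]; split <;> split <;> simp only [ne_eq, Fin.ext_iff] <;> omega
  linear_combination (h i j hij) / 2 + (h i k hik) / 2 - (h j k hjk) / 2

lemma step {N : ℕ} (d : Fin (N + 2) → ℂ) (i j : Fin (N + 2)) (hij : i ≠ j) (ε : ℂ)
    (hε : ε * ε = ε) (h2 : d i + d j ≠ 2 * ε)
    (hrec : ∀ d'' : Fin (N + 1) → ℂ, (∑ k, d'' k = (∑ k, d k) - ε) → Realizable d'') :
    Realizable d := by
  classical
  set e : Fin N ⊕ Fin 2 ≃ Fin (N + 2) := finSumFinEquiv with he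
  have hpq : e (Sum.inr 0) ≠ e (Sum.inr 1) := by
    intro h
    exact absurd (e.injective h) (by simp)
  obtain ⟨σ, hσp, hσq⟩ := exists_perm (e (Sum.inr 0)) (e (Sum.inr 1)) i j hpq hij
  set w' : Fin N → ℂ := fun k => d (σ (e (Sum.inl k))) with hw'
  set e1 : Fin N ⊕ Fin 1 ≃ Fin (N + 1) := finSumFinEquiv with he1
  set merged : Fin N ⊕ Fin 1 → ℂ := Sum.elim w' (fun _ => d i + d j - ε) with hmerged
  have hde : ∑ k, d k = (∑ k, w' k) + (d i + d j) := by
    have h1 : ∑ x : Fin N ⊕ Fin 2, d (σ (e x)) = ∑ k, d k := by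
      rw [Equiv.sum_comp e (fun t => d (σ t)), Equiv.sum_comp σ d]
    rw [← h1, Fintype.sum_sum_type]
    simp [hw', Fin.sum_univ_two, hσp, hσq]
  have hs1 : ∑ x, merged (e1.symm x) = (∑ k, d k) - ε := by
    rw [Equiv.sum_comp e1.symm merged, Fintype.sum_sum_type]
    simp only [hmerged, Sum.elim_inl, Sum.elim_inr, Finset.sum_const, Finset.card_univ,
      Fintype.card_fin, one_smul]
    rw [hde]; ring
  have h1 : Realizable (fun x => merged (e1.symm x)) := hrec _ hs1
  have h2' : Realizable merged := by
    have h := realizable_reindex e1 (fun x => merged (e1.symm x)) h1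
    have heq : ((fun x => merged (e1.symm x)) ∘ e1) = merged := by
      funext x; simp
    rwa [heq] at h
  have h3 : Realizable (Sum.elim w' ![d i, d j]) :=
    expand w' (d i) (d j) ε hε h2 h2'
  have h4 : Realizable ((Sum.elim w' ![d i, d j]) ∘ e.symm) :=
    realizable_reindex e.symm _ h3
  have key : (d ∘ σ) = (Sum.elim w' ![d i, d j]) ∘ e.symm := by
    funext x
    have hx : x = e (e.symm x) := (e.apply_symm_apply x).symm
    rcases hh : e.symm x with k | r
    · simp only [Function.comp_apply, hh, Sum.elim_inl, hw']
      rw [hx, hh]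
    · fin_cases r
      · simp only [Function.comp_apply, hh, Sum.elim_inr]
        rw [hx, hh]
        simp [hσp]
      · simp only [Function.comp_apply, hh, Sum.elim_inr]
        rw [hx, hh]
        simp [hσq]
  have h5 : Realizable (d ∘ σ) := by rw [key]; exact h4
  have h6 := realizable_reindex σ.symm (d ∘ σ) h5
  have h7 : ((d ∘ σ) ∘ ⇑σ.symm) = d := by funext x; simp
  rwa [h7] at h6

lemma suff : ∀ (n : ℕ) (d : Fin n → ℂ),
    ((∀ k, d k = 0) ∨ (∀ k, d k = 1) ∨
      ∃ m : ℕ, 1 ≤ m ∧ m ≤ n - 1 ∧ ∑ k, d k = (m : ℂ)) → Realizable d := by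
  intro n
  induction n with
  | zero =>
    intro d _
    exact ⟨0, by simp, fun k => k.elim0⟩
  | succ n IH =>
    intro d h
    rcases h with h0 | h1 | ⟨m, hm1, hm2, hsum⟩
    · exact ⟨0, by simp, fun k => by simp [h0 k]⟩
    · exact ⟨1, by simp, fun k => by simp [h1 k]⟩
    · cases n with
      | zero => exact absurd hm1 (by omega)
      | succ N =>
        by_cases hmN : m ≤ N
        · have hex : ∃ i j, i ≠ j ∧ d i + d j ≠ 0 := by
            by_contra hcon
            push_neg at hcon
            have hall : ∀ i, d i = 0 := all_eq d (by omega) 0 (fun i j hij => by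
              simpa using hcon i j hij)
            have hz : (m : ℂ) = 0 := by rw [← hsum]; simp [hall]
            have := Nat.cast_eq_zero.mp hz
            omega
          obtain ⟨i, j, hij, hne⟩ := hex
          apply step d i j hij 0 (by ring) (by simpa using hne)
          intro d'' hs''
          apply IH
          right; right
          refine ⟨m, hm1, by omega, ?_⟩
          rw [hs'', hsum]; ring
        · have hme : m = N + 1 := by omega
          cases N with
          | zero =>
            have hd01 : d 0 + d 1 = 1 := by
              have h' := hsum
              rw [Fin.sum_univ_two, hme] at h'
              simpa using h'
            apply step d 0 1 (by decide) 0 (by ring) (by rw [hd01]; norm_num)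
            intro d'' hs''
            apply IH
            right; left
            intro k
            have hk : k = 0 := Fin.fin_one_eq_zero k
            have h1' : ∑ x, d'' x = d'' 0 := by
              simp [Fin.sum_univ_one]
            rw [hk, ← h1', hs'', hsum, hme]
            push_cast; ring
          | succ N' =>
            have hex : ∃ i j, i ≠ j ∧ d i + d j ≠ 2 := by
              by_contra hcon
              push_neg at hcon
              have hall : ∀ i, d i = 1 := all_eq d (by omega) 1 (fun i j hij => by
                rw [hcon i j hij]; norm_num)
              have hz : (m : ℂ) = ((N' + 3 : ℕ) : ℂ) := by
                rw [← hsum]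
                simp [hall]
                push_cast; ring
              have := Nat.cast_injective hz
              omega
            obtain ⟨i, j, hij, hne⟩ := hex
            apply step d i j hij 1 (by ring) (by rw [mul_one]; exact hne)
            intro d'' hs''
            apply IH
            right; right
            refine ⟨N' + 1, by omega, by omega, ?_⟩
            rw [hs'', hsum, hme]
            push_cast; ring

/-- `⟨d₁,…,dₙ⟩ ∈ ℂⁿ` is the diagonal of some idempotent matrix in `Mₙ(ℂ)`
iff all entries are `0`, or all are `1`, or the sum is an integer in `{1,…,n−1}`. -/
theorem idempotent_matrix_diagonal_iff {n : ℕ} (d : Fin n → ℂ) :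
    (∃ D : Matrix (Fin n) (Fin n) ℂ, D * D = D ∧ ∀ k, D k k = d k) ↔
      ((∀ k, d k = 0) ∨ (∀ k, d k = 1) ∨
        ∃ m : ℕ, 1 ≤ m ∧ m ≤ n - 1 ∧ ∑ k, d k = (m : ℂ)) := by
  constructor
  · rintro ⟨D, hDD, hDd⟩
    set f : (Fin n → ℂ) →ₗ[ℂ] (Fin n → ℂ) := Matrix.toLin' D with hf
    have hff : f ∘ₗ f = f := by rw [hf, ← Matrix.toLin'_mul, hDD]
    obtain ⟨p, hp⟩ := (LinearMap.isProj_iff_isIdempotentElem f).mpr hff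
    have htr : LinearMap.trace ℂ (Fin n → ℂ) f = (Module.finrank ℂ p : ℂ) := hp.trace
    have htr2 : LinearMap.trace ℂ (Fin n → ℂ) f = ∑ k, d k := by
      rw [LinearMap.trace_eq_matrix_trace ℂ (Pi.basisFun ℂ (Fin n)) f,
        LinearMap.toMatrix_eq_toMatrix', hf, LinearMap.toMatrix'_toLin']
      exact Finset.sum_congr rfl fun k _ => hDd k
    set r := Module.finrank ℂ p with hr
    have hrn : r ≤ n := by
      have h' := Submodule.finrank_le p
      simpa [Module.finrank_fin_fun] using h'
    by_cases hr0 : r = 0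
    · left
      have hp0 : p = ⊥ := Submodule.finrank_eq_zero.mp (by rw [← hr]; exact hr0)
      intro k
      have h1 : f (Pi.single k 1) = 0 := by
        have hm := hp.map_mem (Pi.single k 1)
        rw [hp0] at hm
        simpa using hm
      have h4 : D.mulVec (Pi.single k 1) = 0 := by
        rwa [hf, Matrix.toLin'_apply] at h1
      have h5 := congrFun h4 k
      simp [Matrix.mulVec_single] at h5
      rw [← hDd k]
      exact h5
    · by_cases hrn' : r = n
      · right; left
        have hptop : p = ⊤ := by
          apply Submodule.eq_top_of_finrank_eq
          rw [← hr, hrn', Module.finrank_fin_fun]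
        intro k
        have h1 : f (Pi.single k 1) = Pi.single k 1 :=
          hp.map_id _ (by rw [hptop]; trivial)
        rw [hf, Matrix.toLin'_apply] at h1
        have h5 := congrFun h1 k
        simp [Matrix.mulVec_single] at h5
        rw [← hDd k]
        exact h5
      · right; right
        refine ⟨r, by omega, by omega, ?_⟩
        rw [← htr2, htr, hr]
  · exact suff n d
end

section
/- Let A ∈ M₂(ℂ) have diagonal entries d₁, d₂ with respect to an orthonormal basis {e₁, e₂}, and let d = λ d₁ + (1−λ) d₂ with 0 ≤ λ ≤ 1. Then there exists an orthonormal basis {b, f} of ℂ² such that ⟨A f, f⟩ = d, ⟨A b, b⟩ = d₁ + d₂ − d, and |⟨e₁, f⟩|² ≤ λ. -/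
open Complex ComplexConjugate

private lemma inner_expand_A (A : EuclideanSpace ℂ (Fin 2) →L[ℂ] EuclideanSpace ℂ (Fin 2))
    (x y : EuclideanSpace ℂ (Fin 2)) (a c a' c' : ℂ) :
    (inner ℂ (a • x + c • y) (A (a' • x + c' • y)) : ℂ)
      = conj a * a' * (inner ℂ x (A x) : ℂ) + conj a * c' * (inner ℂ x (A y) : ℂ)
        + conj c * a' * (inner ℂ y (A x) : ℂ) + conj c * c' * (inner ℂ y (A y) : ℂ) := by
  simp only [map_add, map_smul, inner_add_left, inner_add_right, inner_smul_left,
    inner_smul_right]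
  ring

private lemma inner_expand (x y : EuclideanSpace ℂ (Fin 2))
    (hxx : (inner ℂ x x : ℂ) = 1) (hyy : (inner ℂ y y : ℂ) = 1)
    (hxy : (inner ℂ x y : ℂ) = 0) (hyx : (inner ℂ y x : ℂ) = 0) (a c a' c' : ℂ) :
    (inner ℂ (a • x + c • y) (a' • x + c' • y) : ℂ) = conj a * a' + conj c * c' := by
  simp only [inner_add_left, inner_add_right, inner_smul_left, inner_smul_right,
    hxx, hyy, hxy, hyx]
  ring

/-- Fan's quantitative Toeplitz–Hausdorff lemma in dimension 2:
If `A` has diagonal `d₁, d₂` in the orthonormal basis `{e 0, e 1}` and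
`d = λ d₁ + (1−λ) d₂` with `0 ≤ λ ≤ 1`, then there is an orthonormal basis `{b, f}`
(`b = v 0`, `f = v 1`) with `⟨A f, f⟩ = d`, `⟨A b, b⟩ = d₁ + d₂ − d`, `|⟨e₁, f⟩|² ≤ λ`. -/
theorem fan_quantitative_toeplitz_hausdorff
    (A : EuclideanSpace ℂ (Fin 2) →L[ℂ] EuclideanSpace ℂ (Fin 2))
    (e : OrthonormalBasis (Fin 2) ℂ (EuclideanSpace ℂ (Fin 2)))
    (lam : ℝ) (hlam0 : 0 ≤ lam) (hlam1 : lam ≤ 1) (d : ℂ)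
    (hd : d = (lam : ℂ) * (inner ℂ (e 0) (A (e 0)) : ℂ)
      + (1 - (lam : ℂ)) * (inner ℂ (e 1) (A (e 1)) : ℂ)) :
    ∃ v : OrthonormalBasis (Fin 2) ℂ (EuclideanSpace ℂ (Fin 2)),
      (inner ℂ (v 1) (A (v 1)) : ℂ) = d ∧
      (inner ℂ (v 0) (A (v 0)) : ℂ)
        = (inner ℂ (e 0) (A (e 0)) : ℂ) + (inner ℂ (e 1) (A (e 1)) : ℂ) - d ∧
      ‖(inner ℂ (e 0) (v 1) : ℂ)‖ ^ 2 ≤ lam := by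
  have he : ∀ i j : Fin 2, (inner ℂ (e i) (e j) : ℂ) = if i = j then 1 else 0 :=
    orthonormal_iff_ite.mp e.orthonormal
  have hee00 : (inner ℂ (e 0) (e 0) : ℂ) = 1 := by simpa using he 0 0
  have hee11 : (inner ℂ (e 1) (e 1) : ℂ) = 1 := by simpa using he 1 1
  have hee01 : (inner ℂ (e 0) (e 1) : ℂ) = 0 := by simpa using he 0 1
  have hee10 : (inner ℂ (e 1) (e 0) : ℂ) = 0 := by simpa using he 1 0
  set d₁ : ℂ := (inner ℂ (e 0) (A (e 0)) : ℂ) with hd₁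
  set d₂ : ℂ := (inner ℂ (e 1) (A (e 1)) : ℂ) with hd₂
  by_cases hδ0 : d₁ = d₂
  · refine ⟨e, ?_, ?_, ?_⟩
    · linear_combination -hd - (lam:ℂ) * hδ0
    · linear_combination hd + (lam:ℂ) * hδ0
    · rw [hee01]; simpa using hlam0
  -- main case
  set p : ℂ := (inner ℂ (e 0) (A (e 1)) : ℂ) with hp
  set q : ℂ := (inner ℂ (e 1) (A (e 0)) : ℂ) with hq
  set δ : ℂ := d₁ - d₂ with hδ
  have hδne : δ ≠ 0 := sub_ne_zero.mpr hδ0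
  set c : ℝ → ℂ := fun t => (Complex.exp (t * I) * p + Complex.exp (-(t * I)) * q) / δ with hc
  have hc_cont : Continuous c := by
    apply Continuous.div_const
    fun_prop
  have hc_flip : ∀ t, c (t + Real.pi) = - c t := by
    intro t
    have h1 : Complex.exp (((t + Real.pi : ℝ) : ℂ) * I) = - Complex.exp ((t : ℝ) * I) := by
      push_cast
      rw [add_mul, Complex.exp_add, Complex.exp_pi_mul_I]; ring
    have hmpi : Complex.exp (-(((Real.pi : ℝ) : ℂ) * I)) = -1 := by
      rw [Complex.exp_neg, Complex.exp_pi_mul_I]; norm_num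
    have h2 : Complex.exp (-(((t + Real.pi : ℝ) : ℂ) * I)) = - Complex.exp (-((t : ℝ) * I)) := by
      have harg : (-(((t + Real.pi : ℝ) : ℂ) * I))
          = -(((t : ℝ) : ℂ) * I) + -((((Real.pi : ℝ)) : ℂ) * I) := by push_cast; ring
      rw [harg, Complex.exp_add, hmpi]
      ring
    simp only [hc, h1, h2]
    rw [← neg_div]; ring_nf
  -- find a phase where the imaginary part vanishes
  have hpi : (0:ℝ) ≤ 0 + Real.pi := by positivity
  have him_cont : Continuous fun t => (c t).im := Complex.continuous_im.comp hc_cont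
  obtain ⟨t₀, ht₀⟩ : ∃ t, (c t).im = 0 := by
    have hflip : (c (0 + Real.pi)).im = -(c 0).im := by rw [hc_flip]; simp
    rcases le_total ((c 0).im) 0 with h | h
    · have h0 : (0:ℝ) ∈ Set.Icc ((c 0).im) ((c (0 + Real.pi)).im) := by
        rw [hflip]; exact ⟨h, by linarith⟩
      obtain ⟨t, _, ht⟩ := intermediate_value_Icc hpi him_cont.continuousOn h0
      exact ⟨t, ht⟩
    · have h0 : (0:ℝ) ∈ Set.Icc ((c (0 + Real.pi)).im) ((c 0).im) := by
        rw [hflip]; exact ⟨by linarith, h⟩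
      obtain ⟨t, _, ht⟩ := intermediate_value_Icc' hpi him_cont.continuousOn h0
      exact ⟨t, ht⟩
  obtain ⟨t₁, hIm1, hRe1⟩ : ∃ t, (c t).im = 0 ∧ 0 ≤ (c t).re := by
    rcases le_total 0 ((c t₀).re) with h | h
    · exact ⟨t₀, ht₀, h⟩
    · refine ⟨t₀ + Real.pi, by rw [hc_flip]; simp [ht₀], ?_⟩
      rw [hc_flip]; simp only [Complex.neg_re]; linarith
  set κ : ℝ := (c t₁).re with hκ
  set ω : ℂ := Complex.exp ((t₁ : ℝ) * I) with hω
  have hω_conj : conj ω = Complex.exp (-((t₁ : ℝ) * I)) := by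
    rw [hω, ← Complex.exp_conj]
    congr 1
    simp [Complex.conj_ofReal]
  have hωω : conj ω * ω = 1 := by
    rw [hω_conj, hω, ← Complex.exp_add]
    simp
  have hc_eq : ω * p + conj ω * q = δ * κ := by
    have h1 : c t₁ = (κ : ℂ) := by
      apply Complex.ext
      · simp [hκ]
      · simp [hIm1]
    have h2 : (Complex.exp ((t₁ : ℝ) * I) * p + Complex.exp (-((t₁ : ℝ) * I)) * q) / δ = (κ : ℂ) := h1
    rw [div_eq_iff hδne] at h2
    rw [hω, hω_conj, h2]; ring
  -- find r by IVT
  set g : ℝ → ℝ := fun r => r ^ 2 - lam + r * Real.sqrt (1 - r ^ 2) * κ with hg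
  have hg_cont : Continuous g := by
    apply Continuous.add
    · fun_prop
    · exact (continuous_id.mul (Real.continuous_sqrt.comp (by fun_prop))).mul continuous_const
  have hg0 : g 0 = -lam := by simp [hg]
  have hg1 : g 1 = 1 - lam := by simp [hg]
  obtain ⟨r, hr01, hgr⟩ : ∃ r ∈ Set.Icc (0:ℝ) 1, g r = 0 := by
    have h0 : (0:ℝ) ∈ Set.Icc (g 0) (g 1) := by rw [hg0, hg1]; exact ⟨by linarith, by linarith⟩
    obtain ⟨r, hr, hgr⟩ := intermediate_value_Icc zero_le_one hg_cont.continuousOn h0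
    exact ⟨r, hr, hgr⟩
  obtain ⟨hr0, hr1⟩ := hr01
  set s : ℝ := Real.sqrt (1 - r ^ 2) with hs
  have hs0 : 0 ≤ s := Real.sqrt_nonneg _
  have hs2 : s ^ 2 = 1 - r ^ 2 := Real.sq_sqrt (by nlinarith)
  have hgr' : r ^ 2 - lam + r * s * κ = 0 := hgr
  -- the vectors
  set f : EuclideanSpace ℂ (Fin 2) := (r : ℂ) • e 0 + ((s : ℂ) * ω) • e 1 with hf
  set b : EuclideanSpace ℂ (Fin 2) := (s : ℂ) • e 0 + (-(r : ℂ) * ω) • e 1 with hb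
  have hrsC : ((r:ℂ)) * (r:ℂ) + (s:ℂ) * (s:ℂ) = 1 := by
    have : r * r + s * s = 1 := by nlinarith
    exact_mod_cast this
  have hff : (inner ℂ f f : ℂ) = 1 := by
    rw [hf, inner_expand (e 0) (e 1) hee00 hee11 hee01 hee10]
    simp only [map_mul, Complex.conj_ofReal]
    linear_combination hrsC + ((s:ℂ)*(s:ℂ)) * hωω
  have hbb : (inner ℂ b b : ℂ) = 1 := by
    rw [hb, inner_expand (e 0) (e 1) hee00 hee11 hee01 hee10]
    simp only [map_mul, Complex.conj_ofReal, map_neg]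
    linear_combination hrsC + ((r:ℂ)*(r:ℂ)) * hωω
  have hbf : (inner ℂ b f : ℂ) = 0 := by
    rw [hb, hf, inner_expand (e 0) (e 1) hee00 hee11 hee01 hee10]
    simp only [map_mul, Complex.conj_ofReal, map_neg]
    linear_combination (-(r:ℂ)*(s:ℂ)) * hωω
  have hfb : (inner ℂ f b : ℂ) = 0 := by
    rw [hb, hf, inner_expand (e 0) (e 1) hee00 hee11 hee01 hee10]
    simp only [map_mul, Complex.conj_ofReal, map_neg]
    linear_combination (-(r:ℂ)*(s:ℂ)) * hωω
  have hon : Orthonormal ℂ ![b, f] := by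
    rw [orthonormal_iff_ite]
    intro i j
    fin_cases i <;> fin_cases j <;>
      simp [hff, hbb, hbf, hfb, -inner_self_eq_norm_sq_to_K]
  have hcard : Fintype.card (Fin 2) = Module.finrank ℂ (EuclideanSpace ℂ (Fin 2)) := by
    simp
  have hsp : ⊤ ≤ Submodule.span ℂ (Set.range ![b, f]) :=
    (hon.linearIndependent.span_eq_top_of_card_eq_finrank hcard).ge
  refine ⟨OrthonormalBasis.mk hon hsp, ?_, ?_, ?_⟩
  all_goals rw [show ⇑(OrthonormalBasis.mk hon hsp) = ![b, f] from OrthonormalBasis.coe_mk hon hsp]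
  · show (inner ℂ (![b,f] 1) (A (![b,f] 1)) : ℂ) = d
    simp only [Matrix.cons_val_one, Matrix.head_cons, Matrix.cons_val_zero]
    rw [hf, inner_expand_A]
    simp only [map_mul, Complex.conj_ofReal]
    rw [← hd₁, ← hd₂, ← hp, ← hq]
    have hgrC : ((r:ℂ)) ^ 2 - (lam:ℂ) + (r:ℂ) * (s:ℂ) * (κ:ℂ) = 0 := by exact_mod_cast hgr'
    have hs2C : ((s:ℂ)) ^ 2 = 1 - (r:ℂ) ^ 2 := by exact_mod_cast hs2
    rw [hd]
    linear_combination d₁ * hgrC + d₂ * hs2C - d₂ * hgrC + (r:ℂ) * (s:ℂ) * hc_eq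
      + ((s:ℂ)*(s:ℂ)*d₂) * hωω
  · show (inner ℂ (![b,f] 0) (A (![b,f] 0)) : ℂ) = d₁ + d₂ - d
    simp only [Matrix.cons_val_zero]
    rw [hb, inner_expand_A]
    simp only [map_mul, Complex.conj_ofReal, map_neg]
    rw [← hd₁, ← hd₂, ← hp, ← hq]
    have hgrC : ((r:ℂ)) ^ 2 - (lam:ℂ) + (r:ℂ) * (s:ℂ) * (κ:ℂ) = 0 := by exact_mod_cast hgr'
    have hs2C : ((s:ℂ)) ^ 2 = 1 - (r:ℂ) ^ 2 := by exact_mod_cast hs2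
    rw [hd]
    linear_combination (-d₁) * hgrC + d₁ * hs2C + d₂ * hgrC - (r:ℂ) * (s:ℂ) * hc_eq
      + ((r:ℂ)*(r:ℂ)*d₂) * hωω
  · show ‖(inner ℂ (e 0) (![b,f] 1) : ℂ)‖ ^ 2 ≤ lam
    simp only [Matrix.cons_val_one, Matrix.head_cons, Matrix.cons_val_zero]
    have h1 : (inner ℂ (e 0) f : ℂ) = (r : ℂ) := by
      rw [hf, inner_add_right, inner_smul_right, inner_smul_right, hee00, hee01]
      ring
    rw [h1, Complex.norm_real, Real.norm_eq_abs]
    rw [_root_.sq_abs]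
    linarith [mul_nonneg (mul_nonneg hr0 hs0) hRe1, hgr']
end

section
/- An absolutely summable sequence ⟨dₙ⟩ ∈ ℓ¹ of complex numbers is the diagonal, with respect to some orthonormal basis, of a nonzero finite-rank idempotent operator on a separable infinite-dimensional Hilbert space if and only if Σₙ dₙ is a positive integer. -/
open scoped ComplexConjugate ENNReal

noncomputable section
namespace FRIDiag

/-- Chain helper: modify a `HasSum` at two points. -/
lemma hasSum_chain {M : Type*} [AddCommMonoid M] [TopologicalSpace M] [ContinuousAdd M]
    {f : ℕ → M} {s : M} (hf : HasSum f s) {p q : ℕ} (hpq : p ≠ q)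
    (hfp : f p = 0) (hfq : f q = 0) (a b : M) :
    HasSum (fun n => if n = p then a else if n = q then b else f n) (a + (b + s)) := by
  have h1 : HasSum (fun n => if n = p then a else 0) a := hasSum_ite_eq p a
  have h2 : HasSum (fun n => if n = q then b else 0) b := hasSum_ite_eq q b
  refine (h1.add (h2.add hf)).congr_fun fun n => ?_
  by_cases hp : n = p
  · subst hp; simp [hpq, hfp]
  · by_cases hq : n = q
    · subst hq; simp [hp, hfq]
    · simp [hp, hq]

/-- the square-root pair. -/
def sA (d : ℕ → ℂ) (n : ℕ) : ℂ := ((Real.sqrt ‖d n‖ : ℝ) : ℂ)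

def sB (d : ℕ → ℂ) (n : ℕ) : ℂ := d n / sA d n

lemma sA_conj_mul_sB (d : ℕ → ℂ) (n : ℕ) : conj (sA d n) * sB d n = d n := by
  by_cases h : d n = 0
  · simp [sA, sB, h]
  · have h0 : Real.sqrt ‖d n‖ ≠ 0 :=
      (Real.sqrt_pos.mpr (norm_pos_iff.mpr h)).ne'
    have h0' : ((Real.sqrt ‖d n‖ : ℝ) : ℂ) ≠ 0 := Complex.ofReal_ne_zero.mpr h0
    rw [sB, sA, Complex.conj_ofReal]
    rw [mul_div_assoc', mul_comm, mul_div_assoc, div_self h0', mul_one]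

lemma norm_sq_sA (d : ℕ → ℂ) (n : ℕ) : ‖sA d n‖ ^ 2 = ‖d n‖ := by
  rw [sA, Complex.norm_real, Real.norm_eq_abs, abs_of_nonneg (Real.sqrt_nonneg _),
    Real.sq_sqrt (norm_nonneg _)]

lemma norm_sq_sB (d : ℕ → ℂ) (n : ℕ) : ‖sB d n‖ ^ 2 = ‖d n‖ := by
  by_cases h : d n = 0
  · simp [sB, h]
  · have h1 : ‖d n‖ ≠ 0 := by simpa using h
    rw [sB, norm_div, div_pow, sA, Complex.norm_real, Real.norm_eq_abs,
      abs_of_nonneg (Real.sqrt_nonneg _), Real.sq_sqrt (norm_nonneg _), pow_two,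
      mul_div_assoc, div_self h1, mul_one]

/-- Membership in ℓ² via summability of squares of norms. -/
lemma memℓp_two_of_sq {f : ℕ → ℂ} (hf : Summable fun n => ‖f n‖ ^ 2) : Memℓp f 2 := by
  apply memℓp_gen
  have h2 : (2 : ℝ≥0∞).toReal = (2 : ℝ) := by norm_num
  rw [h2]
  refine hf.congr fun n => ?_
  rw [← Real.rpow_natCast (‖f n‖) 2]
  norm_num

lemma scalars {y dp dq : ℂ} (h : y = 0 ∨ ‖dp‖ + ‖dq‖ < ‖y‖) :
    ∃ c gp gq : ℂ, gp + gq = y ∧ gp = c * (dq - gq) ∧ gq = c * (dp - gp) := by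
  rcases h with h | h
  · exact ⟨0, 0, 0, by simp [h], by simp, by simp⟩
  · have hdd1 : dp + dq - y ≠ 0 := by
      intro h0
      have he : y = dp + dq := by linear_combination -h0
      have h2 : ‖y‖ ≤ ‖dp‖ + ‖dq‖ := he ▸ norm_add_le dp dq
      linarith
    have hdd2 : dp + dq - 2 * y ≠ 0 := by
      intro h0
      have hy : (0:ℝ) ≤ ‖y‖ := norm_nonneg y
      have he : 2 * y = dp + dq := by linear_combination -h0
      have h2 : ‖2 * y‖ ≤ ‖dp‖ + ‖dq‖ := he ▸ norm_add_le dp dq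
      rw [norm_mul] at h2
      simp only [Complex.norm_ofNat] at h2
      linarith
    refine ⟨y / (dp + dq - y), y * (dq - y) / (dp + dq - 2 * y),
      y - y * (dq - y) / (dp + dq - 2 * y), by ring, ?_, ?_⟩
    · have ha := mul_inv_cancel₀ hdd1
      have hb := mul_inv_cancel₀ hdd2
      linear_combination (-y * (dq - y) * (dp + dq - 2 * y)⁻¹) * ha + (y * (dp + dq - y)⁻¹ * (dq - y)) * hb
    · have ha := mul_inv_cancel₀ hdd1
      have hb := mul_inv_cancel₀ hdd2
      linear_combination (-y + y * (dp + dq - y)⁻¹ * dp) * hb - y * (dp + dq - 2 * y)⁻¹ * (dp - y) * ha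
end FRIDiag

namespace FRIDiag

lemma key : ∀ (m : ℕ) (S : Set ℕ), S.Infinite → ∀ d : ℕ → ℂ,
    (∀ n, n ∉ S → d n = 0) → (Summable fun n => ‖d n‖) → (∑' n, d n) = (m : ℂ) + 1 →
    ∀ p q : ℕ, p ≠ q →
    ∃ u v : Fin (m + 1) → ℕ → ℂ,
      (∀ i, Memℓp (u i) 2) ∧ (∀ i, Memℓp (v i) 2) ∧
      (∀ i j, HasSum (fun n => conj (v i n) * u j n) (if i = j then 1 else 0)) ∧
      (∀ n, ∑ i, conj (v i n) * u i n = d n) ∧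
      (∀ i n, n ∉ S → u i n = 0 ∧ v i n = 0) ∧
      (∀ i, i ≠ 0 → u i p = 0 ∧ u i q = 0 ∧ v i p = 0 ∧ v i q = 0) := by
  intro m
  induction m with
  | zero =>
    intro S hS d hsupp hd hsum p q hpq
    have hsum1 : (∑' n, d n) = 1 := by rw [hsum]; norm_num
    refine ⟨fun _ => sB d, fun _ => sA d,
      fun _ => memℓp_two_of_sq (hd.congr fun n => (norm_sq_sB d n).symm),
      fun _ => memℓp_two_of_sq (hd.congr fun n => (norm_sq_sA d n).symm), ?_, ?_, ?_, ?_⟩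
    · intro i j
      have h01 : i = j := by
        have hi := i.isLt; have hj := j.isLt
        exact Fin.ext (by omega)
      subst h01
      simp only [if_pos rfl]
      have hds : HasSum d 1 := hsum1 ▸ (hd.of_norm).hasSum
      exact hds.congr_fun fun n => sA_conj_mul_sB d n
    · intro n; rw [Fin.sum_univ_one]; exact sA_conj_mul_sB d n
    · intro i n hn
      constructor
      · simp [sB, hsupp n hn]
      · simp [sA, hsupp n hn]
    · intro i hi
      exact absurd (Fin.ext (by have := i.isLt; omega)) hi
  | succ m ih =>
    intro S hS d hsupp hd hsum p q hpq
    classical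
    set B : Set ℕ := S \ {p, q} with hB
    have hBS : B ⊆ S := Set.diff_subset
    have hBinf : B.Infinite := hS.diff ((Set.finite_singleton q).insert p)
    have hpB : p ∉ B := fun h => h.2 (by simp)
    have hqB : q ∉ B := fun h => h.2 (by simp)
    set A : Set ℕ := S ∩ {p, q} with hA
    have hAS : A ⊆ S := Set.inter_subset_left
    have hAnB : ∀ n, n ∈ A → n ∉ B := fun n hn hB' => hB'.2 hn.2
    have hBnA : ∀ n, n ∈ B → n ∉ A := fun n hn hA' => hn.2 hA'.2
    have hdS : Summable d := hd.of_norm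
    have hsAI : Summable (A.indicator d) := hdS.indicator A
    set s : ℂ := ∑' n, A.indicator d n with hs
    have hsA : HasSum (A.indicator d) s := hsAI.hasSum
    set y : ℂ := 1 - s with hy
    -- choose p' q'
    obtain ⟨p', hp'B, q', hq'B, hp'q', hkey⟩ :
        ∃ p', p' ∈ B ∧ ∃ q', q' ∈ B ∧ p' ≠ q' ∧ (y = 0 ∨ ‖d p'‖ + ‖d q'‖ < ‖y‖) := by
      by_cases hy0 : y = 0
      · obtain ⟨p', hp', q', hq', hne⟩ := hBinf.nontrivial
        exact ⟨p', hp', q', hq', hne, Or.inl hy0⟩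
      · have hyn : (0:ℝ) < ‖y‖ := norm_pos_iff.mpr hy0
        have hev : ∀ᶠ n in Filter.cofinite, ‖d n‖ < ‖y‖ / 2 :=
          hd.tendsto_cofinite_zero (Iio_mem_nhds (by linarith))
        have hfin : {n | ¬ ‖d n‖ < ‖y‖ / 2}.Finite := Filter.eventually_cofinite.mp hev
        obtain ⟨p', hp', q', hq', hne⟩ := (hBinf.diff hfin).nontrivial
        have h1 : ‖d p'‖ < ‖y‖ / 2 := not_not.mp hp'.2
        have h2 : ‖d q'‖ < ‖y‖ / 2 := not_not.mp hq'.2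
        exact ⟨p', hp'.1, q', hq'.1, hne, Or.inr (by linarith)⟩
    obtain ⟨c, gp, gq, hgsum, hgp, hgq⟩ := scalars hkey
    have hp'S : p' ∈ S := hBS hp'B
    have hq'S : q' ∈ S := hBS hq'B
    have hp'A : p' ∉ A := hBnA p' hp'B
    have hq'A : q' ∉ A := hBnA q' hq'B
    set C : Set ℕ := B \ {p', q'} with hC
    have hCB : C ⊆ B := Set.diff_subset
    have hp'C : p' ∉ C := fun h => h.2 (by simp)
    have hq'C : q' ∉ C := fun h => h.2 (by simp)
    have hCsum : Summable (C.indicator d) := hdS.indicator C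
    set t : ℂ := ∑' n, C.indicator d n with ht
    have hCt : HasSum (C.indicator d) t := hCsum.hasSum
    set d' : ℕ → ℂ := fun n =>
      if n = p' then d p' - gp else if n = q' then d q' - gq else C.indicator d n with hd'
    have hd'p' : d' p' = d p' - gp := by simp [hd']
    have hd'q' : d' q' = d q' - gq := by
      simp [hd', (hp'q'.symm : q' ≠ p')]
    have hd'supp : ∀ n, n ∉ B → d' n = 0 := by
      intro n hn
      have h1 : n ≠ p' := fun h => hn (h ▸ hp'B)
      have h2 : n ≠ q' := fun h => hn (h ▸ hq'B)
      have h3 : n ∉ C := fun h => hn (hCB h)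
      simp [hd', h1, h2, Set.indicator_of_notMem h3]
    -- A ∪ C indicator identity
    have hACind : ∀ n, n ≠ p' → n ≠ q' →
        A.indicator d n + C.indicator d n = d n := by
      intro n h1 h2
      by_cases hnS : n ∈ S
      · by_cases hpq' : n ∈ ({p, q} : Set ℕ)
        · have hnA : n ∈ A := ⟨hnS, hpq'⟩
          have hnC : n ∉ C := fun h => (h.1).2 hpq'
          rw [Set.indicator_of_mem hnA, Set.indicator_of_notMem hnC, add_zero]
        · have hnA : n ∉ A := fun h => hpq' h.2
          have hnC : n ∈ C := ⟨⟨hnS, hpq'⟩, by simp [h1, h2]⟩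
          rw [Set.indicator_of_notMem hnA, Set.indicator_of_mem hnC, zero_add]
      · have hnA : n ∉ A := fun h => hnS (hAS h)
        have hnC : n ∉ C := fun h => hnS (hBS (hCB h))
        rw [Set.indicator_of_notMem hnA, Set.indicator_of_notMem hnC, hsupp n hnS, add_zero]
    have hAp' : A.indicator d p' = 0 := Set.indicator_of_notMem hp'A d
    have hAq' : A.indicator d q' = 0 := Set.indicator_of_notMem hq'A d
    have hCp' : C.indicator d p' = 0 := Set.indicator_of_notMem hp'C d
    have hCq' : C.indicator d q' = 0 := Set.indicator_of_notMem hq'C d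
    -- total sum identity
    have hsum_d : HasSum d (d p' + (d q' + (s + t))) := by
      have hf : HasSum (fun n => A.indicator d n + C.indicator d n) (s + t) := hsA.add hCt
      have hchain := hasSum_chain hf hp'q'
        (by rw [hAp', hCp', add_zero]) (by rw [hAq', hCq', add_zero]) (d p') (d q')
      refine hchain.congr_fun fun n => ?_
      by_cases h1 : n = p'
      · rw [if_pos h1, h1]
      · by_cases h2 : n = q'
        · rw [if_neg h1, if_pos h2, h2]
        · rw [if_neg h1, if_neg h2, hACind n h1 h2]
    have htotal : d p' + (d q' + (s + t)) = ((m:ℂ) + 1) + 1 := by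
      have h1 : HasSum d (((m:ℂ) + 1) + 1) := by
        have := hdS.hasSum
        rw [hsum] at this
        convert this using 2
        push_cast
        ring
      exact hsum_d.unique h1
    -- the new sequence sums correctly
    have hd'sum : HasSum d' ((d p' - gp) + ((d q' - gq) + t)) :=
      hasSum_chain hCt hp'q' hCp' hCq' _ _
    have hd'tsum : (∑' n, d' n) = (m : ℂ) + 1 := by
      rw [hd'sum.tsum_eq]
      have : gp + gq = 1 - s := hgsum.trans hy
      linear_combination htotal - this
    have hd'norm : Summable fun n => ‖d' n‖ := by
      have hchain := (hasSum_chain (hd.indicator C).hasSum hp'q'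
        (Set.indicator_of_notMem hp'C _) (Set.indicator_of_notMem hq'C _)
        ‖d p' - gp‖ ‖d q' - gq‖).summable
      refine hchain.congr fun n => ?_
      by_cases h1 : n = p'
      · simp [hd', h1]
      · by_cases h2 : n = q'
        · simp [hd', h1, h2, Ne.symm hp'q']
        · simp only [hd', if_neg h1, if_neg h2, Set.indicator_apply]
          by_cases h3 : n ∈ C <;> simp [h3]
    obtain ⟨U, V, hU2, hV2, hbi, hdg, hsp, hds⟩ :=
      ih B hBinf d' hd'supp hd'norm hd'tsum p' q' hp'q'
    -- diagonal entries of the sub-system at p' and q'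
    have hsub : ∀ r : ℕ, conj (V 0 r) * U 0 r = d' r - (d' r - conj (V 0 r) * U 0 r) := by
      intro r; ring
    have hD'p : conj (V 0 p') * U 0 p' = d p' - gp := by
      have h1 := hdg p'
      rw [Finset.sum_eq_single 0 (fun i _ hi => by rw [(hds i hi).1, mul_zero])
        (fun h => absurd (Finset.mem_univ _) h)] at h1
      rw [h1, hd'p']
    have hD'q : conj (V 0 q') * U 0 q' = d q' - gq := by
      have h1 := hdg q'
      rw [Finset.sum_eq_single 0 (fun i _ hi => by rw [(hds i hi).2.1, mul_zero])
        (fun h => absurd (Finset.mem_univ _) h)] at h1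
      rw [h1, hd'q']
    -- pair zero
    set up : ℂ := conj (V 0 q') with hup
    set uq : ℂ := -conj (V 0 p') with huq
    set vp : ℂ := conj (c * U 0 q') with hvp
    set vq : ℂ := -conj (c * U 0 p') with hvq
    have hvpup : conj vp * up = gp := by
      rw [hvp, hup, Complex.conj_conj]
      calc (c * U 0 q') * conj (V 0 q') = c * (conj (V 0 q') * U 0 q') := by ring
      _ = c * (d q' - gq) := by rw [hD'q]
      _ = gp := hgp.symm
    have hvquq : conj vq * uq = gq := by
      rw [hvq, huq, map_neg, Complex.conj_conj]
      calc -(c * U 0 p') * -conj (V 0 p') = c * (conj (V 0 p') * U 0 p') := by ring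
      _ = c * (d p' - gp) := by rw [hD'p]
      _ = gq := hgq.symm
    set u0 : ℕ → ℂ := fun n =>
      if n = p' then up else if n = q' then uq else A.indicator (sB d) n with hu0
    set v0 : ℕ → ℂ := fun n =>
      if n = p' then vp else if n = q' then vq else A.indicator (sA d) n with hv0
    have hv0u0 : ∀ n, conj (v0 n) * u0 n =
        (if n = p' then conj vp * up else if n = q' then conj vq * uq
          else A.indicator d n) := by
      intro n
      by_cases h1 : n = p'
      · simp [hu0, hv0, h1]
      · by_cases h2 : n = q'
        · simp [hu0, hv0, h1, h2, Ne.symm hp'q']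
        · simp only [hu0, hv0, if_neg h1, if_neg h2]
          by_cases h3 : n ∈ A
          · rw [Set.indicator_of_mem h3, Set.indicator_of_mem h3, Set.indicator_of_mem h3,
              sA_conj_mul_sB]
          · rw [Set.indicator_of_notMem h3, Set.indicator_of_notMem h3,
              Set.indicator_of_notMem h3, map_zero, zero_mul]
    have hmem_u0 : Memℓp u0 2 := by
      apply memℓp_two_of_sq
      have hchain := (hasSum_chain (hd.indicator A).hasSum hp'q'
        (Set.indicator_of_notMem hp'A _) (Set.indicator_of_notMem hq'A _)
        (‖up‖ ^ 2) (‖uq‖ ^ 2)).summable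
      refine hchain.congr fun n => ?_
      by_cases h1 : n = p'
      · simp [hu0, h1]
      · by_cases h2 : n = q'
        · simp [hu0, h1, h2, Ne.symm hp'q']
        · simp only [hu0, if_neg h1, if_neg h2]
          by_cases h3 : n ∈ A
          · rw [Set.indicator_of_mem h3, Set.indicator_of_mem h3, norm_sq_sB]
          · rw [Set.indicator_of_notMem h3, Set.indicator_of_notMem h3]
            simp
    have hmem_v0 : Memℓp v0 2 := by
      apply memℓp_two_of_sq
      have hchain := (hasSum_chain (hd.indicator A).hasSum hp'q'
        (Set.indicator_of_notMem hp'A _) (Set.indicator_of_notMem hq'A _)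
        (‖vp‖ ^ 2) (‖vq‖ ^ 2)).summable
      refine hchain.congr fun n => ?_
      by_cases h1 : n = p'
      · simp [hv0, h1]
      · by_cases h2 : n = q'
        · simp [hv0, h1, h2, Ne.symm hp'q']
        · simp only [hv0, if_neg h1, if_neg h2]
          by_cases h3 : n ∈ A
          · rw [Set.indicator_of_mem h3, Set.indicator_of_mem h3, norm_sq_sA]
          · rw [Set.indicator_of_notMem h3, Set.indicator_of_notMem h3]
            simp
    refine ⟨Fin.cons u0 U, Fin.cons v0 V, ?_, ?_, ?_, ?_, ?_, ?_⟩
    · intro i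
      refine Fin.cases ?_ ?_ i
      · simpa using hmem_u0
      · intro j; simpa using hU2 j
    · intro i
      refine Fin.cases ?_ ?_ i
      · simpa using hmem_v0
      · intro j; simpa using hV2 j
    · intro i j
      refine Fin.cases ?_ ?_ i
      · refine Fin.cases ?_ ?_ j
        · -- (0,0)
          simp only [Fin.cons_zero, if_pos rfl]
          have hchain := hasSum_chain hsA hp'q' hAp' hAq' (conj vp * up) (conj vq * uq)
          have h1 : conj vp * up + (conj vq * uq + s) = 1 := by
            rw [hvpup, hvquq]
            have h2 : gp + gq = 1 - s := hgsum.trans hy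
            linear_combination h2
          rw [← h1]
          exact hchain.congr_fun fun n => hv0u0 n
        · -- (0, succ j)
          intro j
          simp only [Fin.cons_zero, Fin.cons_succ]
          rw [if_neg (fun h => (Fin.succ_ne_zero j) h.symm)]
          have hchain := hasSum_chain (hasSum_zero : HasSum (fun _ : ℕ => (0:ℂ)) 0) hp'q' rfl rfl
            (conj vp * U j p') (conj vq * U j q')
          have hval : conj vp * U j p' + (conj vq * U j q' + 0) = 0 := by
            rcases eq_or_ne j 0 with rfl | hj
            · rw [hvp, hvq, map_neg, Complex.conj_conj, Complex.conj_conj]; ring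
            · rw [(hds j hj).1, (hds j hj).2.1, mul_zero, mul_zero]; ring
          rw [← hval]
          refine hchain.congr_fun fun n => ?_
          by_cases h1 : n = p'
          · simp [hv0, h1]
          · by_cases h2 : n = q'
            · simp [hv0, h1, h2, Ne.symm hp'q']
            · simp only [hv0, if_neg h1, if_neg h2]
              by_cases h3 : n ∈ A
              · rw [(hsp j n (hAnB n h3)).1, mul_zero]
              · rw [Set.indicator_of_notMem h3, map_zero, zero_mul]
      · intro i
        refine Fin.cases ?_ ?_ j
        · -- (succ i, 0)
          simp only [Fin.cons_zero, Fin.cons_succ]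
          rw [if_neg (Fin.succ_ne_zero i)]
          have hchain := hasSum_chain (hasSum_zero : HasSum (fun _ : ℕ => (0:ℂ)) 0) hp'q' rfl rfl
            (conj (V i p') * up) (conj (V i q') * uq)
          have hval : conj (V i p') * up + (conj (V i q') * uq + 0) = 0 := by
            rcases eq_or_ne i 0 with rfl | hi
            · rw [hup, huq]; ring
            · rw [(hds i hi).2.2.1, (hds i hi).2.2.2, map_zero, zero_mul, zero_mul]; ring
          rw [← hval]
          refine hchain.congr_fun fun n => ?_
          by_cases h1 : n = p'
          · simp [hu0, h1]
          · by_cases h2 : n = q'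
            · simp [hu0, h1, h2, Ne.symm hp'q']
            · simp only [hu0, if_neg h1, if_neg h2]
              by_cases h3 : n ∈ A
              · rw [(hsp i n (hAnB n h3)).2, map_zero, zero_mul]
              · rw [Set.indicator_of_notMem h3, mul_zero]
        · -- (succ i, succ j)
          intro j
          simp only [Fin.cons_succ]
          have hb := hbi i j
          rcases eq_or_ne i j with rfl | hij
          · simpa using hb
          · rw [if_neg (fun h => hij (Fin.succ_injective _ h))]
            rw [if_neg hij] at hb
            exact hb
    · intro n
      rw [Fin.sum_univ_succ]
      simp only [Fin.cons_zero, Fin.cons_succ]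
      rw [hdg n, hv0u0 n]
      by_cases h1 : n = p'
      · rw [if_pos h1, h1, hd'p', hvpup]; ring
      · by_cases h2 : n = q'
        · rw [if_neg h1, if_pos h2, h2, hd'q', hvquq]; ring
        · rw [if_neg h1, if_neg h2]
          have h3 : d' n = C.indicator d n := by simp [hd', h1, h2, Ne.symm hp'q']
          rw [h3, hACind n h1 h2]
    · intro i n hn
      refine Fin.cases ?_ ?_ i
      · simp only [Fin.cons_zero]
        have h1 : n ≠ p' := fun h => hn (h ▸ hp'S)
        have h2 : n ≠ q' := fun h => hn (h ▸ hq'S)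
        have h3 : n ∉ A := fun h => hn (hAS h)
        constructor
        · simp [hu0, h1, h2, Set.indicator_of_notMem h3]
        · simp [hv0, h1, h2, Set.indicator_of_notMem h3]
      · intro j
        simp only [Fin.cons_succ]
        exact hsp j n (fun h => hn (hBS h))
    · intro i hi
      induction i using Fin.cases with
      | zero => exact absurd rfl hi
      | succ j =>
        simp only [Fin.cons_succ]
        have h1 := hsp j p hpB
        have h2 := hsp j q hqB
        exact ⟨h1.1, h2.1, h1.2, h2.2⟩

end FRIDiag
namespace FRIDiag

open ContinuousLinearMap Module Submodule

variable {H : Type*} [NormedAddCommGroup H] [InnerProductSpace ℂ H] [CompleteSpace H]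

local notation "⟪" x ", " y "⟫" => @inner ℂ _ _ x y

lemma range_fixed (D : H →L[ℂ] H) (hD2 : D ∘L D = D) {z : H}
    (hz : z ∈ LinearMap.range (D : H →ₗ[ℂ] H)) : D z = z := by
  obtain ⟨w, rfl⟩ := hz
  calc D (D w) = (D ∘L D) w := rfl
  _ = D w := by rw [hD2]

lemma forward (e : HilbertBasis ℕ ℂ H) (D : H →L[ℂ] H) (hD2 : D ∘L D = D)
    (hfd : FiniteDimensional ℂ (LinearMap.range (D : H →ₗ[ℂ] H))) :
    HasSum (fun n => ⟪e n, D (e n)⟫) ((finrank ℂ (LinearMap.range (D : H →ₗ[ℂ] H)) : ℕ) : ℂ) := by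
  classical
  set R := LinearMap.range (D : H →ₗ[ℂ] H) with hR
  set r := finrank ℂ R with hr
  let b : Basis (Fin r) ℂ R := finBasis ℂ R
  have hmem : ∀ x : H, D x ∈ R := fun x => LinearMap.mem_range_self _ x
  let cod : H →L[ℂ] R := D.codRestrict R hmem
  let ψ : Fin r → (H →L[ℂ] ℂ) := fun i =>
    (LinearMap.toContinuousLinearMap (b.coord i)).comp cod
  let v : Fin r → H := fun i => (InnerProductSpace.toDual ℂ H).symm (ψ i)
  have hv : ∀ i x, ⟪v i, x⟫ = ψ i x := fun i x => InnerProductSpace.toDual_symm_apply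
  have hDx : ∀ x : H, D x = ∑ i, ψ i x • (b i : H) := by
    intro x
    have h1 : cod x = ∑ i, b.repr (cod x) i • b i := (b.sum_repr (cod x)).symm
    have h2 : D x = ((cod x : R) : H) := rfl
    rw [h2, h1]
    push_cast
    rfl
  have hdiag : ∀ n, ⟪e n, D (e n)⟫ = ∑ i, ⟪v i, e n⟫ * ⟪e n, (b i : H)⟫ := by
    intro n
    rw [hDx (e n), inner_sum]
    refine Finset.sum_congr rfl fun i _ => ?_
    rw [inner_smul_right, hv]
  have hsum : HasSum (fun n => ∑ i, ⟪v i, e n⟫ * ⟪e n, (b i : H)⟫)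
      (∑ i, ⟪v i, (b i : H)⟫) :=
    hasSum_sum fun i _ => e.hasSum_inner_mul_inner (v i) (b i : H)
  have hval : ∑ i, ⟪v i, (b i : H)⟫ = (r : ℂ) := by
    have h3 : ∀ i, ⟪v i, (b i : H)⟫ = 1 := by
      intro i
      rw [hv]
      have hfix : cod ((b i : H)) = b i := by
        apply Subtype.ext
        exact range_fixed D hD2 (b i).2
      show b.coord i (cod (b i : H)) = 1
      rw [hfix]
      simp
    simp [h3]
  rw [← hval]
  exact hsum.congr_fun fun n => hdiag n

lemma rank_pos (D : H →L[ℂ] H) (hD0 : D ≠ 0)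
    (hfd : FiniteDimensional ℂ (LinearMap.range (D : H →ₗ[ℂ] H))) :
    0 < finrank ℂ (LinearMap.range (D : H →ₗ[ℂ] H)) := by
  have hnt : Nontrivial (LinearMap.range (D : H →ₗ[ℂ] H)) := by
    obtain ⟨x, hx⟩ : ∃ x, D x ≠ 0 := by
      by_contra h
      push_neg at h
      exact hD0 (ContinuousLinearMap.ext fun x => by simp [h x])
    exact ⟨⟨⟨D x, LinearMap.mem_range_self _ x⟩, 0, by simpa using hx⟩⟩
  exact Module.finrank_pos

lemma backward (e₀ : HilbertBasis ℕ ℂ H) (d : ℕ → ℂ) (hd : Summable fun n => ‖d n‖)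
    (m : ℕ) (hm : 0 < m) (hsum : (∑' n, d n) = (m : ℂ)) :
    ∃ D : H →L[ℂ] H, D ∘L D = D ∧ D ≠ 0 ∧ FiniteDimensional ℂ (LinearMap.range (D : H →ₗ[ℂ] H)) ∧
      ∃ e : HilbertBasis ℕ ℂ H, ∀ n, ⟪e n, D (e n)⟫ = d n := by
  classical
  obtain ⟨m', rfl⟩ : ∃ m', m = m' + 1 := ⟨m - 1, (Nat.succ_pred_eq_of_pos hm).symm⟩
  have hsum' : (∑' n, d n) = (m' : ℂ) + 1 := by rw [hsum]; push_cast; ring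
  obtain ⟨u, v, hu2, hv2, hbi, hdg, -, -⟩ :=
    key m' Set.univ Set.infinite_univ d (fun n hn => absurd (Set.mem_univ n) hn) hd hsum'
      0 1 (by norm_num)
  set Uu : Fin (m' + 1) → H := fun i => e₀.repr.symm ⟨u i, hu2 i⟩ with hUu
  set Vv : Fin (m' + 1) → H := fun i => e₀.repr.symm ⟨v i, hv2 i⟩ with hVv
  have hcoordU : ∀ i n, ⟪e₀ n, Uu i⟫ = u i n := by
    intro i n
    rw [← e₀.repr_apply_apply, hUu]
    rw [LinearIsometryEquiv.apply_symm_apply]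
  have hcoordV : ∀ i n, ⟪e₀ n, Vv i⟫ = v i n := by
    intro i n
    rw [← e₀.repr_apply_apply, hVv]
    rw [LinearIsometryEquiv.apply_symm_apply]
  have hinner : ∀ i j, ⟪Vv i, Uu j⟫ = if i = j then 1 else 0 := by
    intro i j
    rw [hVv, hUu, LinearIsometryEquiv.inner_map_map]
    rw [lp.inner_eq_tsum]
    rw [← (hbi i j).tsum_eq]
    congr 1
    funext n
    simp [RCLike.inner_apply, mul_comm]
  set D : H →L[ℂ] H :=
    ∑ i, (ContinuousLinearMap.toSpanSingleton ℂ (Uu i)).comp (innerSL ℂ (Vv i)) with hD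
  have hDapply : ∀ x, D x = ∑ i, ⟪Vv i, x⟫ • Uu i := by
    intro x
    rw [hD]
    rw [ContinuousLinearMap.sum_apply]
    refine Finset.sum_congr rfl fun i _ => ?_
    rw [ContinuousLinearMap.comp_apply, ContinuousLinearMap.toSpanSingleton_apply,
      innerSL_apply_apply]
  have hD2 : D ∘L D = D := by
    ext x
    rw [ContinuousLinearMap.comp_apply, hDapply x, hDapply (∑ i, ⟪Vv i, x⟫ • Uu i)]
    refine Finset.sum_congr rfl fun j _ => ?_
    congr 1
    rw [inner_sum]
    rw [Finset.sum_eq_single j (fun i _ hij => ?_) (fun h => absurd (Finset.mem_univ _) h)]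
    · rw [inner_smul_right, hinner, if_pos rfl, mul_one]
    · rw [inner_smul_right, hinner, if_neg (fun h => hij h.symm), mul_zero]
  have hUune : Uu 0 ≠ 0 := by
    intro h
    have h1 := hinner 0 0
    rw [h, inner_zero_right, if_pos rfl] at h1
    exact zero_ne_one h1
  have hfix : D (Uu 0) = Uu 0 := by
    rw [hDapply]
    rw [Finset.sum_eq_single 0
      (fun i _ hi => by rw [hinner, if_neg hi, zero_smul])
      (fun h => absurd (Finset.mem_univ _) h)]
    rw [hinner, if_pos rfl, one_smul]
  have hDne : D ≠ 0 := by
    intro h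
    rw [h] at hfix
    exact hUune (by simpa using hfix.symm)
  have hfd : FiniteDimensional ℂ (LinearMap.range (D : H →ₗ[ℂ] H)) := by
    have hle : LinearMap.range (D : H →ₗ[ℂ] H) ≤ Submodule.span ℂ (Set.range Uu) := by
      rintro x ⟨w, rfl⟩
      show D w ∈ _
      rw [hDapply]
      exact Submodule.sum_mem _ fun i _ =>
        Submodule.smul_mem _ _ (Submodule.subset_span ⟨i, rfl⟩)
    have hsp : FiniteDimensional ℂ (Submodule.span ℂ (Set.range Uu)) :=
      FiniteDimensional.span_of_finite ℂ (Set.finite_range Uu)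
    exact Submodule.finiteDimensional_of_le hle
  refine ⟨D, hD2, hDne, hfd, e₀, ?_⟩
  intro n
  rw [hDapply, inner_sum]
  rw [← hdg n]
  refine Finset.sum_congr rfl fun i _ => ?_
  rw [inner_smul_right, hcoordU]
  congr 1
  rw [← inner_conj_symm, hcoordV]

end FRIDiag

/-- An absolutely summable sequence `⟨d n⟩` is the diagonal, in some
orthonormal basis, of a nonzero finite-rank idempotent on a separable
infinite-dimensional Hilbert space iff its sum is a positive integer. -/
theorem finite_rank_idempotent_diagonal_iff {H : Type*} [NormedAddCommGroup H]
    [InnerProductSpace ℂ H] [CompleteSpace H] (e₀ : HilbertBasis ℕ ℂ H)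
    (d : ℕ → ℂ) (hd : Summable fun n => ‖d n‖) :
    (∃ D : H →L[ℂ] H, D ∘L D = D ∧ D ≠ 0 ∧ FiniteDimensional ℂ (LinearMap.range (D : H →ₗ[ℂ] H)) ∧
        ∃ e : HilbertBasis ℕ ℂ H, ∀ n, (inner ℂ (e n) (D (e n)) : ℂ) = d n) ↔
      ∃ m : ℕ, 0 < m ∧ (∑' n, d n) = (m : ℂ) := by
  constructor
  · rintro ⟨D, hD2, hD0, hfd, e, he⟩
    refine ⟨Module.finrank ℂ (LinearMap.range (D : H →ₗ[ℂ] H)), FRIDiag.rank_pos D hD0 hfd, ?_⟩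
    have h1 := FRIDiag.forward e D hD2 hfd
    have h2 : HasSum d ((Module.finrank ℂ (LinearMap.range (D : H →ₗ[ℂ] H)) : ℕ) : ℂ) :=
      h1.congr_fun fun n => (he n).symm
    exact h2.tsum_eq
  · rintro ⟨m, hm, hsum⟩
    exact FRIDiag.backward e₀ d hd m hm hsum
end
end

section
/- Let D ∈ B(H⊕H) be the idempotent with block form [[I,0],[T,0]] where T ∈ B(H) is normal. Then the negative part (Re D)₋ of the real part of D is trace class if and only if T is a Hilbert–Schmidt operator. -/
set_option maxHeartbeats 1000000
set_option synthInstance.maxHeartbeats 400000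

open ContinuousLinearMap Complex

noncomputable section

namespace ReIdemAux

local notation "⟪" x ", " y "⟫" => @inner ℂ _ _ x y

variable {E W : Type*} [NormedAddCommGroup E] [InnerProductSpace ℂ E] [CompleteSpace E]
  [NormedAddCommGroup W] [InnerProductSpace ℂ W] [CompleteSpace W]

/-- Parseval: the norm squared is the sum of squared Fourier coefficients. -/
lemma parseval_hasSum {ι : Type*} (b : HilbertBasis ι ℂ E) (x : E) :
    HasSum (fun i => ‖⟪b i, x⟫‖ ^ 2) (‖x‖ ^ 2) := by
  have h := b.hasSum_inner_mul_inner x x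
  rw [inner_self_eq_norm_sq_to_K] at h
  have h' : HasSum (fun i => ((‖⟪b i, x⟫‖ ^ 2 : ℝ) : ℂ)) ((↑(‖x‖ ^ 2) : ℝ) : ℂ) := by
    convert h using 2 with i
    · rfl
    · rw [← inner_conj_symm x (b i), RCLike.conj_mul]
      norm_cast
    · exact Complex.ofReal_pow _ _
  exact (RCLike.hasSum_ofReal ℂ).mp h'

/-- Transfer of the Hilbert–Schmidt property to the adjoint, between arbitrary bases. -/
lemma hs_transfer {ι κ : Type*} (S : E →L[ℂ] W) (b : HilbertBasis ι ℂ E)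
    (c : HilbertBasis κ ℂ W) (hb : Summable fun i => ‖S (b i)‖ ^ 2) :
    Summable fun j => ‖(ContinuousLinearMap.adjoint S) (c j)‖ ^ 2 := by
  set f : ι × κ → ℝ := fun p => ‖⟪c p.2, S (b p.1)⟫‖ ^ 2 with hf
  have hrow : ∀ i, HasSum (fun j => f (i, j)) (‖S (b i)‖ ^ 2) := fun i =>
    parseval_hasSum c (S (b i))
  have hcol : ∀ j, HasSum (fun i => f (i, j))
      (‖(ContinuousLinearMap.adjoint S) (c j)‖ ^ 2) := by
    intro j
    have h := parseval_hasSum b ((ContinuousLinearMap.adjoint S) (c j))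
    refine HasSum.congr_fun h fun i => ?_
    simp only [hf]
    rw [adjoint_inner_right]
    rw [← inner_conj_symm (S (b i)) (c j), RCLike.norm_conj]
  have hne : ∀ p : ι × κ, 0 ≤ f p := fun p => by positivity
  have hsum : Summable f := by
    refine (summable_prod_of_nonneg hne).2 ⟨fun i => (hrow i).summable, ?_⟩
    refine hb.congr fun i => ?_
    exact ((hrow i).tsum_eq).symm
  have hswap : Summable fun p : κ × ι => f p.swap := hsum.prod_symm
  have h2 := ((summable_prod_of_nonneg (fun p : κ × ι => hne p.swap)).1 hswap).2
  refine h2.congr fun j => ?_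
  exact (hcol j).tsum_eq

/-- Cauchy–Schwarz style inequality for positive operators. -/
lemma pos_sq_le (P : E →L[ℂ] E) (hP : P.IsPositive) (z : E) :
    ‖P z‖ ^ 2 ≤ ‖P‖ * Complex.re ⟪z, P z⟫ := by
  have hre : ∀ w : E, Complex.re ⟪w, P w⟫ = Complex.re ⟪P w, w⟫ := fun w =>
    inner_re_symm (𝕜 := ℂ) w (P w)
  rcases eq_or_ne ‖P‖ 0 with h0 | h0
  · have hP0 : P = 0 := norm_eq_zero.mp h0
    simp [hP0]
  have hc : (0 : ℝ) < ‖P‖ := lt_of_le_of_ne (norm_nonneg P) (Ne.symm h0)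
  set c := ‖P‖ with hcdef
  set y := z - ((c⁻¹ : ℝ) : ℂ) • P z with hy
  have hpos : 0 ≤ Complex.re ⟪P y, y⟫ := hP.2 y
  have hsym := hP.1
  have hexp : Complex.re ⟪P y, y⟫
      = Complex.re ⟪P z, z⟫ - 2 * c⁻¹ * ‖P z‖ ^ 2
        + c⁻¹ ^ 2 * Complex.re ⟪P (P z), P z⟫ := by
    have hPPz : ⟪P (P z), z⟫ = ⟪P z, P z⟫ := hsym (P z) z
    have : ⟪P y, y⟫ = ⟪P z, z⟫ - ((c⁻¹ : ℝ) : ℂ) * ⟪P z, P z⟫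
        - ((c⁻¹ : ℝ) : ℂ) * ⟪P (P z), z⟫
        + ((c⁻¹ : ℝ) : ℂ) ^ 2 * ⟪P (P z), P z⟫ := by
      simp only [hy, map_sub, map_smul, inner_sub_left, inner_sub_right,
        inner_smul_left, inner_smul_right, Complex.conj_ofReal]
      ring
    rw [this, hPPz]
    have hnn : ⟪P z, P z⟫ = ((‖P z‖ ^ 2 : ℝ) : ℂ) := by
      rw [inner_self_eq_norm_sq_to_K]; norm_cast
    rw [hnn]
    simp only [Complex.sub_re, Complex.add_re, ← Complex.ofReal_pow,
      Complex.re_ofReal_mul, Complex.ofReal_re]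
    ring
  have hb : Complex.re ⟪P (P z), P z⟫ ≤ c * ‖P z‖ ^ 2 := by
    have h1 : Complex.re ⟪P (P z), P z⟫ ≤ ‖P (P z)‖ * ‖P z‖ :=
      re_inner_le_norm (𝕜 := ℂ) (P (P z)) (P z)
    have h2 : ‖P (P z)‖ ≤ c * ‖P z‖ := P.le_opNorm (P z)
    nlinarith [norm_nonneg (P z), norm_nonneg (P (P z))]
  have hfinal : 0 ≤ Complex.re ⟪P z, z⟫ - c⁻¹ * ‖P z‖ ^ 2 := by
    have hci : 0 < c⁻¹ := inv_pos.mpr hc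
    have : c⁻¹ ^ 2 * Complex.re ⟪P (P z), P z⟫ ≤ c⁻¹ * ‖P z‖ ^ 2 := by
      have := mul_le_mul_of_nonneg_left hb (le_of_lt (pow_pos hci 2))
      calc c⁻¹ ^ 2 * Complex.re ⟪P (P z), P z⟫ ≤ c⁻¹ ^ 2 * (c * ‖P z‖ ^ 2) := this
        _ = c⁻¹ * (c⁻¹ * c) * ‖P z‖ ^ 2 := by ring
        _ = c⁻¹ * ‖P z‖ ^ 2 := by rw [inv_mul_cancel₀ (ne_of_gt hc)]; ring
    have h5 : 0 ≤ Complex.re ⟪P z, z⟫ - 2 * c⁻¹ * ‖P z‖ ^ 2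
        + c⁻¹ ^ 2 * Complex.re ⟪P (P z), P z⟫ := hexp ▸ hpos
    linarith [this, h5]
  rw [hre]
  have := mul_le_mul_of_nonneg_left hfinal (le_of_lt hc)
  have hcc : c * (c⁻¹ * ‖P z‖ ^ 2) = ‖P z‖ ^ 2 := by
    rw [← mul_assoc, mul_inv_cancel₀ (ne_of_gt hc), one_mul]
  nlinarith [this]

/-- A Hilbert basis of the L² product adapted to the second factor. -/
lemma exists_prod_basis (a b : HilbertBasis ℕ ℂ E) :
    ∃ Eb : HilbertBasis ℕ ℂ (WithLp 2 (E × E)),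
      ∀ j : ℕ, Eb (Equiv.natSumNatEquivNat (Sum.inr j))
        = (WithLp.equiv 2 (E × E)).symm (0, b j) := by
  classical
  set v : ℕ ⊕ ℕ → WithLp 2 (E × E) :=
    Sum.elim (fun i => (WithLp.equiv 2 (E × E)).symm (a i, 0))
      (fun j => (WithLp.equiv 2 (E × E)).symm (0, b j)) with hv
  have hona := orthonormal_iff_ite.mp a.orthonormal
  have honb := orthonormal_iff_ite.mp b.orthonormal
  have hon : Orthonormal ℂ v := by
    rw [orthonormal_iff_ite]
    rintro (i | i) (j | j) <;>
      simp only [hv, Sum.elim_inl, Sum.elim_inr, WithLp.prod_inner_apply,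
        WithLp.equiv_symm_apply, WithLp.ofLp_toLp, WithLp.ofLp_fst, WithLp.ofLp_snd, inner_zero_left, inner_zero_right,
        add_zero, zero_add, hona, honb, Sum.inl.injEq, Sum.inr.injEq] <;>
      simp
  set v' : ℕ → WithLp 2 (E × E) := v ∘ Equiv.natSumNatEquivNat.symm with hv'
  have hon' : Orthonormal ℂ v' := hon.comp _ (Equiv.natSumNatEquivNat.symm.injective)
  have hrange : Set.range v' = Set.range v :=
    Equiv.natSumNatEquivNat.symm.surjective.range_comp v
  have hsp : (Submodule.span ℂ (Set.range v'))ᗮ = ⊥ := by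
    rw [hrange, Submodule.eq_bot_iff]
    intro x hx
    have hx' : ∀ u ∈ Submodule.span ℂ (Set.range v), ⟪u, x⟫ = 0 :=
      (Submodule.mem_orthogonal _ x).mp hx
    have h1 : ∀ i : ℕ, ⟪a i, x.fst⟫ = 0 := by
      intro i
      have := hx' (v (Sum.inl i)) (Submodule.subset_span ⟨Sum.inl i, rfl⟩)
      simpa [hv, WithLp.prod_inner_apply] using this
    have h2 : ∀ j : ℕ, ⟪b j, x.snd⟫ = 0 := by
      intro j
      have := hx' (v (Sum.inr j)) (Submodule.subset_span ⟨Sum.inr j, rfl⟩)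
      simpa [hv, WithLp.prod_inner_apply] using this
    have hfst : x.fst = 0 := by
      have h0 : HasSum (fun i : ℕ => (0 : ℂ)) ⟪x.fst, x.fst⟫ :=
        (a.hasSum_inner_mul_inner x.fst x.fst).congr_fun fun i => by rw [h1 i, mul_zero]
      have : ⟪x.fst, x.fst⟫ = 0 := h0.unique hasSum_zero
      exact inner_self_eq_zero.mp this
    have hsnd : x.snd = 0 := by
      have h0 : HasSum (fun j : ℕ => (0 : ℂ)) ⟪x.snd, x.snd⟫ :=
        (b.hasSum_inner_mul_inner x.snd x.snd).congr_fun fun j => by rw [h2 j, mul_zero]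
      have : ⟪x.snd, x.snd⟫ = 0 := h0.unique hasSum_zero
      exact inner_self_eq_zero.mp this
    show x = 0
    exact WithLp.ofLp_injective 2 (Prod.ext hfst hsnd)
  refine ⟨HilbertBasis.mkOfOrthogonalEqBot hon' hsp, fun j => ?_⟩
  rw [HilbertBasis.coe_mkOfOrthogonalEqBot]
  simp [hv', hv]

end ReIdemAux

open ReIdemAux

local notation "⟪" x ", " y "⟫" => @inner ℂ _ _ x y

/-- Let `D ∈ B(H ⊕ H)` be the idempotent with block form `[[I,0],[T,0]]`
(`D (x, y) = (x, T x)`), `T` normal. Then the negative part `Pm` of `Re D`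
(given by a decomposition `Re D = Pp − Pm` into positive operators with `Pp Pm = 0`)
is trace class (summable diagonal in every orthonormal basis) iff `T` is
Hilbert–Schmidt (`Σ ‖T e i‖²` converges in every orthonormal basis). -/
theorem re_idempotent_negPart_traceClass_iff_hilbertSchmidt {H : Type*} [NormedAddCommGroup H]
    [InnerProductSpace ℂ H] [CompleteSpace H] (e₀ : HilbertBasis ℕ ℂ H)
    (T : H →L[ℂ] H) (hT : IsStarNormal T)
    (D Pp Pm : WithLp 2 (H × H) →L[ℂ] WithLp 2 (H × H))
    (hD : ∀ x y : H, D ((WithLp.equiv 2 (H × H)).symm (x, y))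
      = (WithLp.equiv 2 (H × H)).symm (x, T x))
    (hPp : Pp.IsPositive) (hPm : Pm.IsPositive)
    (hdecomp : Pp - Pm = (1 / 2 : ℂ) • (D + ContinuousLinearMap.adjoint D))
    (horth : Pp ∘L Pm = 0) :
    (∀ e : HilbertBasis ℕ ℂ (WithLp 2 (H × H)),
        Summable (fun i => (inner ℂ (e i) (Pm (e i)) : ℂ))) ↔
      (∀ e : HilbertBasis ℕ ℂ H, Summable (fun i => ‖T (e i)‖ ^ 2)) := by
  classical
  have hmsa := hPm.isSelfAdjoint
  have hpsa := hPp.isSelfAdjoint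
  have hmp : Pm ∘L Pp = 0 := by
    have h := congrArg ContinuousLinearMap.adjoint horth
    rw [ContinuousLinearMap.adjoint_comp, hmsa.adjoint_eq, hpsa.adjoint_eq] at h
    simpa using h
  have hPpPm : ∀ w, Pp (Pm w) = 0 := by
    intro w
    have := congrFun (congrArg (fun (f : WithLp 2 (H × H) →L[ℂ] WithLp 2 (H × H)) => ⇑f) horth) w
    simpa using this
  have hPmPp : ∀ w, Pm (Pp w) = 0 := by
    intro w
    have := congrFun (congrArg (fun (f : WithLp 2 (H × H) →L[ℂ] WithLp 2 (H × H)) => ⇑f) hmp) w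
    simpa using this
  have hz_pair : ∀ z : WithLp 2 (H × H), (WithLp.equiv 2 (H × H)).symm (z.fst, z.snd) = z :=
    fun z => rfl
  have hDapp : ∀ z : WithLp 2 (H × H),
      D z = (WithLp.equiv 2 (H × H)).symm (z.fst, T z.fst) := by
    intro z
    have := hD z.fst z.snd
    rwa [hz_pair z] at this
  have hDadj : ∀ z : WithLp 2 (H × H), (ContinuousLinearMap.adjoint D) z
      = (WithLp.equiv 2 (H × H)).symm (z.fst + (ContinuousLinearMap.adjoint T) z.snd, 0) := by
    intro z
    apply ext_inner_left ℂ
    intro w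
    rw [ContinuousLinearMap.adjoint_inner_right, hDapp w]
    simp only [WithLp.prod_inner_apply, WithLp.equiv_symm_apply, WithLp.ofLp_toLp, WithLp.ofLp_fst, WithLp.ofLp_snd,
      inner_add_right, inner_zero_right, add_zero, ContinuousLinearMap.adjoint_inner_right]
  have hAfst : ∀ z : WithLp 2 (H × H),
      ((Pp - Pm) z).fst = z.fst + (2⁻¹ : ℂ) • (ContinuousLinearMap.adjoint T) z.snd := by
    intro z
    rw [hdecomp]
    have : ((1 / 2 : ℂ) • (D + ContinuousLinearMap.adjoint D)) z
        = (1 / 2 : ℂ) • (D z + (ContinuousLinearMap.adjoint D) z) := by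
      simp [ContinuousLinearMap.add_apply]
    rw [this, hDapp z, hDadj z]
    show (1 / 2 : ℂ) • ((z.fst, T z.fst).1 + (z.fst + (ContinuousLinearMap.adjoint T) z.snd, (0:H)).1)
      = z.fst + (2⁻¹ : ℂ) • (ContinuousLinearMap.adjoint T) z.snd
    simp only []
    module
  have hAsnd : ∀ z : WithLp 2 (H × H), ((Pp - Pm) z).snd = (2⁻¹ : ℂ) • T z.fst := by
    intro z
    rw [hdecomp]
    have : ((1 / 2 : ℂ) • (D + ContinuousLinearMap.adjoint D)) z
        = (1 / 2 : ℂ) • (D z + (ContinuousLinearMap.adjoint D) z) := by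
      simp [ContinuousLinearMap.add_apply]
    rw [this, hDapp z, hDadj z]
    show (1 / 2 : ℂ) • ((z.fst, T z.fst).2 + (z.fst + (ContinuousLinearMap.adjoint T) z.snd, (0:H)).2)
      = (2⁻¹ : ℂ) • T z.fst
    simp only []
    module
  -- the master pointwise identity
  have key : ∀ z : WithLp 2 (H × H),
      Complex.re ⟪z, Pm z⟫ + ‖Pm z‖ ^ 2 + (‖Pp z‖ ^ 2 - Complex.re ⟪z, Pp z⟫)
        = 4⁻¹ * ‖T z.fst‖ ^ 2 + 4⁻¹ * ‖(ContinuousLinearMap.adjoint T) z.snd‖ ^ 2 := by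
    intro z
    have hAA : (Pp - Pm) ((Pp - Pm) z) = Pp (Pp z) + Pm (Pm z) := by
      simp only [ContinuousLinearMap.sub_apply, map_sub, hPpPm, hPmPp]
      abel
    have h1 : Complex.re ⟪z, (Pp - Pm) ((Pp - Pm) z)⟫ = ‖Pp z‖ ^ 2 + ‖Pm z‖ ^ 2 := by
      rw [hAA, inner_add_right]
      have e1 : ⟪z, Pp (Pp z)⟫ = ⟪Pp z, Pp z⟫ := (hpsa.isSymmetric z (Pp z)).symm
      have e2 : ⟪z, Pm (Pm z)⟫ = ⟪Pm z, Pm z⟫ := (hmsa.isSymmetric z (Pm z)).symm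
      have e3 : ∀ w : WithLp 2 (H × H), (⟪w, w⟫ : ℂ).re = ‖w‖ ^ 2 := by
        intro w
        have h : (⟪w, w⟫ : ℂ) = ((‖w‖ ^ 2 : ℝ) : ℂ) := by
          rw [inner_self_eq_norm_sq_to_K]; norm_cast
        rw [h, Complex.ofReal_re]
      rw [Complex.add_re, e1, e2, e3, e3]
    have h2 : Complex.re ⟪z, (Pp - Pm) z⟫
        = Complex.re ⟪z, Pp z⟫ - Complex.re ⟪z, Pm z⟫ := by
      rw [ContinuousLinearMap.sub_apply, inner_sub_right, Complex.sub_re]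
    have hq1 : ((Pp - Pm) ((Pp - Pm) z)).fst - ((Pp - Pm) z).fst
        = (4⁻¹ : ℂ) • (ContinuousLinearMap.adjoint T) (T z.fst) := by
      rw [hAfst ((Pp - Pm) z), hAfst z, hAsnd z, map_smul]
      module
    have hq2 : ((Pp - Pm) ((Pp - Pm) z)).snd - ((Pp - Pm) z).snd
        = (4⁻¹ : ℂ) • T ((ContinuousLinearMap.adjoint T) z.snd) := by
      rw [hAsnd ((Pp - Pm) z), hAfst z, hAsnd z, map_add, map_smul]
      module
    have h3 : Complex.re ⟪z, (Pp - Pm) ((Pp - Pm) z) - (Pp - Pm) z⟫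
        = 4⁻¹ * ‖T z.fst‖ ^ 2 + 4⁻¹ * ‖(ContinuousLinearMap.adjoint T) z.snd‖ ^ 2 := by
      rw [WithLp.prod_inner_apply]
      simp only [WithLp.ofLp_fst, WithLp.ofLp_snd]
      rw [WithLp.sub_fst, WithLp.sub_snd, hq1, hq2]
      rw [inner_smul_right, inner_smul_right]
      rw [ContinuousLinearMap.adjoint_inner_right T z.fst (T z.fst)]
      have e2 : ⟪z.snd, T ((ContinuousLinearMap.adjoint T) z.snd)⟫
          = ⟪(ContinuousLinearMap.adjoint T) z.snd, (ContinuousLinearMap.adjoint T) z.snd⟫ := by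
        rw [← ContinuousLinearMap.adjoint_inner_left T]
      have e1' : (⟪T z.fst, T z.fst⟫ : ℂ) = ((‖T z.fst‖ ^ 2 : ℝ) : ℂ) := by
        rw [inner_self_eq_norm_sq_to_K]; norm_cast
      have e3' : (⟪(ContinuousLinearMap.adjoint T) z.snd, (ContinuousLinearMap.adjoint T) z.snd⟫ : ℂ)
          = ((‖(ContinuousLinearMap.adjoint T) z.snd‖ ^ 2 : ℝ) : ℂ) := by
        rw [inner_self_eq_norm_sq_to_K]; norm_cast
      have c4 : (4⁻¹ : ℂ) = ((4⁻¹ : ℝ) : ℂ) := by norm_num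
      rw [e2, e1', e3', c4, Complex.add_re, ← Complex.ofReal_mul, ← Complex.ofReal_mul,
        Complex.ofReal_re, Complex.ofReal_re]
    have h4 : Complex.re ⟪z, (Pp - Pm) ((Pp - Pm) z) - (Pp - Pm) z⟫
        = Complex.re ⟪z, (Pp - Pm) ((Pp - Pm) z)⟫ - Complex.re ⟪z, (Pp - Pm) z⟫ := by
      rw [inner_sub_right, Complex.sub_re]
    rw [h4, h1, h2] at h3
    linarith [h3]
  -- Q A Q = 0 : on vectors with vanishing first component, Pp and Pm have equal diagonal
  have hQAQ : ∀ z : WithLp 2 (H × H), z.fst = 0 →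
      Complex.re ⟪z, Pp z⟫ = Complex.re ⟪z, Pm z⟫ := by
    intro z hz
    have h0 : ⟪z, (Pp - Pm) z⟫ = 0 := by
      rw [WithLp.prod_inner_apply]; simp only [WithLp.ofLp_fst, WithLp.ofLp_snd]; rw [hAsnd z, hz]
      simp only [inner_zero_left, map_zero, smul_zero, inner_zero_right, add_zero, zero_add]
    have h2 : Complex.re ⟪z, (Pp - Pm) z⟫
        = Complex.re ⟪z, Pp z⟫ - Complex.re ⟪z, Pm z⟫ := by
      rw [ContinuousLinearMap.sub_apply, inner_sub_right, Complex.sub_re]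
    rw [h0, Complex.zero_re] at h2
    linarith [h2]
  -- Pp ≤ Pp ^ 2
  have hPpSq : ∀ x : WithLp 2 (H × H), Complex.re ⟪x, Pp x⟫ ≤ ‖Pp x‖ ^ 2 := by
    intro x
    set K := (LinearMap.range (Pm : WithLp 2 (H × H) →ₗ[ℂ] WithLp 2 (H × H))).topologicalClosure with hK
    haveI : CompleteSpace K := (Submodule.isClosed_topologicalClosure _).completeSpace_coe
    have hker : ∀ v ∈ K, Pp v = 0 := by
      have hle : K ≤ LinearMap.ker (Pp : WithLp 2 (H × H) →ₗ[ℂ] WithLp 2 (H × H)) := by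
        apply Submodule.topologicalClosure_minimal
        · rintro v ⟨w, rfl⟩
          exact LinearMap.mem_ker.mpr (hPpPm w)
        · exact ContinuousLinearMap.isClosed_ker Pp
      intro v hv
      exact LinearMap.mem_ker.mp (hle hv)
    obtain ⟨v, hv, z, hz, rfl⟩ := K.exists_add_mem_mem_orthogonal x
    have hPpv : Pp v = 0 := hker v hv
    have hPmz : Pm z = 0 := by
      have h1 : ⟪Pm (Pm z), z⟫ = 0 := by
        refine (Submodule.mem_orthogonal K z).mp hz _ ?_
        exact Submodule.le_topologicalClosure _ (LinearMap.mem_range_self _ (Pm z))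
      have h2 : ⟪Pm (Pm z), z⟫ = ⟪Pm z, Pm z⟫ := hmsa.isSymmetric (Pm z) z
      rw [h2] at h1
      exact inner_self_eq_zero.mp h1
    have hPpx : Pp (v + z) = Pp z := by rw [map_add, hPpv, zero_add]
    have hvz : ⟪v, Pp z⟫ = 0 := by
      have h := hpsa.isSymmetric v z
      simp only [ContinuousLinearMap.coe_coe] at h
      rw [← h, hPpv, inner_zero_left]
    have hip : Complex.re ⟪v + z, Pp (v + z)⟫ = Complex.re ⟪z, Pp z⟫ := by
      rw [hPpx, inner_add_left, Complex.add_re, hvz]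
      simp
    have hk := key z
    rw [hPmz] at hk
    simp only [inner_zero_right, Complex.zero_re, norm_zero] at hk
    have hpos : (0:ℝ) ≤ 4⁻¹ * ‖T z.fst‖ ^ 2 + 4⁻¹ * ‖(ContinuousLinearMap.adjoint T) z.snd‖ ^ 2 := by
      positivity
    rw [hip, hPpx]
    nlinarith [hk, hpos]
  constructor
  · -- trace class implies Hilbert-Schmidt
    intro tc
    have hC : ∀ gb : HilbertBasis ℕ ℂ H,
        Summable fun j => ‖(ContinuousLinearMap.adjoint T) (gb j)‖ ^ 2 := by
      intro gb
      obtain ⟨Eb, hEb⟩ := exists_prod_basis e₀ gb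
      have h1 : Summable fun i => (inner ℂ (Eb i) (Pm (Eb i)) : ℂ).re :=
        (Complex.hasSum_re (tc Eb).hasSum).summable
      have h2 : Summable fun j : ℕ =>
          (inner ℂ (Eb (Equiv.natSumNatEquivNat (Sum.inr j)))
            (Pm (Eb (Equiv.natSumNatEquivNat (Sum.inr j)))) : ℂ).re :=
        h1.comp_injective (Equiv.natSumNatEquivNat.injective.comp Sum.inr_injective)
      set zj : ℕ → WithLp 2 (H × H) := fun j => (WithLp.equiv 2 (H × H)).symm (0, gb j) with hzj
      have h2' : Summable fun j => Complex.re ⟪zj j, Pm (zj j)⟫ :=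
        h2.congr fun j => by rw [hEb j]
      refine Summable.of_nonneg_of_le (fun j => by positivity) ?_
        (h2'.mul_left (4 * (‖Pp‖ + ‖Pm‖)))
      intro j
      have hz1 : (zj j).fst = 0 := rfl
      have hz2 : (zj j).snd = gb j := rfl
      have hk := key (zj j)
      rw [hz1, hz2] at hk
      simp only [map_zero, norm_zero] at hk
      have hq := hQAQ (zj j) hz1
      have hb1 : ‖Pm (zj j)‖ ^ 2 ≤ ‖Pm‖ * Complex.re ⟪zj j, Pm (zj j)⟫ := pos_sq_le Pm hPm _
      have hb2 : ‖Pp (zj j)‖ ^ 2 ≤ ‖Pp‖ * Complex.re ⟪zj j, Pp (zj j)⟫ := pos_sq_le Pp hPp _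
      have hnn : 0 ≤ Complex.re ⟪zj j, Pm (zj j)⟫ := hPm.re_inner_nonneg_right _
      beta_reduce
      rw [hq] at hb2
      nlinarith [hk, hb1, hb2, hnn, sq_nonneg ‖Pm (zj j)‖, sq_nonneg ‖Pp (zj j)‖]
    intro e
    have := hs_transfer (ContinuousLinearMap.adjoint T) e₀ e (hC e₀)
    simpa [ContinuousLinearMap.adjoint_adjoint] using this
  · -- Hilbert-Schmidt implies trace class
    intro hs e
    have hT0 : Summable fun i => ‖T (e₀ i)‖ ^ 2 := hs e₀
    have hT1 : Summable fun i => ‖(ContinuousLinearMap.adjoint T) (e₀ i)‖ ^ 2 :=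
      hs_transfer T e₀ e₀ hT0
    set fstL : WithLp 2 (H × H) →L[ℂ] H := (ContinuousLinearMap.fst ℂ H H).comp
      ((WithLp.prodContinuousLinearEquiv 2 ℂ H H : WithLp 2 (H × H) ≃L[ℂ] H × H) :
        WithLp 2 (H × H) →L[ℂ] H × H) with hfstL
    set sndL : WithLp 2 (H × H) →L[ℂ] H := (ContinuousLinearMap.snd ℂ H H).comp
      ((WithLp.prodContinuousLinearEquiv 2 ℂ H H : WithLp 2 (H × H) ≃L[ℂ] H × H) :
        WithLp 2 (H × H) →L[ℂ] H × H) with hsndL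
    set C1 : WithLp 2 (H × H) →L[ℂ] H := T.comp fstL with hC1
    set C2 : WithLp 2 (H × H) →L[ℂ] H := (ContinuousLinearMap.adjoint T).comp sndL with hC2
    have hC1app : ∀ z : WithLp 2 (H × H), C1 z = T z.fst := fun z => rfl
    have hC2app : ∀ z : WithLp 2 (H × H), C2 z = (ContinuousLinearMap.adjoint T) z.snd :=
      fun z => rfl
    have hC1adj : ∀ y : H, (ContinuousLinearMap.adjoint C1) y
        = (WithLp.equiv 2 (H × H)).symm ((ContinuousLinearMap.adjoint T) y, 0) := by
      intro y
      apply ext_inner_left ℂ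
      intro w
      rw [ContinuousLinearMap.adjoint_inner_right, hC1app w]
      simp only [WithLp.prod_inner_apply, WithLp.equiv_symm_apply, WithLp.ofLp_toLp, WithLp.ofLp_fst, WithLp.ofLp_snd,
        inner_zero_right, add_zero, ContinuousLinearMap.adjoint_inner_right]
    have hC2adj : ∀ y : H, (ContinuousLinearMap.adjoint C2) y
        = (WithLp.equiv 2 (H × H)).symm (0, T y) := by
      intro y
      apply ext_inner_left ℂ
      intro w
      rw [ContinuousLinearMap.adjoint_inner_right, hC2app w]
      simp only [WithLp.prod_inner_apply, WithLp.equiv_symm_apply, WithLp.ofLp_toLp, WithLp.ofLp_fst, WithLp.ofLp_snd,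
        inner_zero_right, zero_add, add_zero]
      rw [ContinuousLinearMap.adjoint_inner_left]
    have hS1 : Summable fun i => ‖(ContinuousLinearMap.adjoint C1) (e₀ i)‖ ^ 2 :=
      hT1.congr fun i => by rw [hC1adj, WithLp.equiv_symm_apply, WithLp.norm_toLp_fst]
    have hS2 : Summable fun i => ‖(ContinuousLinearMap.adjoint C2) (e₀ i)‖ ^ 2 :=
      hT0.congr fun i => by rw [hC2adj, WithLp.equiv_symm_apply, WithLp.norm_toLp_snd]
    have hC1e : Summable fun k => ‖C1 (e k)‖ ^ 2 := by
      have := hs_transfer (ContinuousLinearMap.adjoint C1) e₀ e hS1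
      simpa [ContinuousLinearMap.adjoint_adjoint] using this
    have hC2e : Summable fun k => ‖C2 (e k)‖ ^ 2 := by
      have := hs_transfer (ContinuousLinearMap.adjoint C2) e₀ e hS2
      simpa [ContinuousLinearMap.adjoint_adjoint] using this
    have hmaj : Summable fun k => 4⁻¹ * ‖C1 (e k)‖ ^ 2 + 4⁻¹ * ‖C2 (e k)‖ ^ 2 :=
      (hC1e.mul_left _).add (hC2e.mul_left _)
    have hre : Summable fun k => Complex.re ⟪e k, Pm (e k)⟫ := by
      refine Summable.of_nonneg_of_le (fun k => hPm.re_inner_nonneg_right _) ?_ hmaj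
      intro k
      have hk := key (e k)
      have hp := hPpSq (e k)
      rw [hC1app, hC2app]
      nlinarith [hk, hp, sq_nonneg ‖Pm (e k)‖]
    have hreal : ∀ z : WithLp 2 (H × H), (⟪z, Pm z⟫ : ℂ) = ((Complex.re ⟪z, Pm z⟫ : ℝ) : ℂ) := by
      intro z
      have h1 : (starRingEnd ℂ) ⟪z, Pm z⟫ = ⟪z, Pm z⟫ := by
        rw [inner_conj_symm]
        exact hmsa.isSymmetric z z
      exact (Complex.conj_eq_iff_re.mp h1).symm
    exact (Complex.summable_ofReal.mpr hre).congr fun k => (hreal (e k)).symm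
end
end

section
/- Let D = P + K where P ∈ B(H) is an orthogonal projection, K is a Hilbert–Schmidt operator, and D is idempotent (D² = D). Then P K P and P^⊥ K P^⊥ are trace-class operators. -/
open scoped InnerProductSpace

/-- An operator is Hilbert–Schmidt if `Σ ‖K e i‖²` converges in every orthonormal basis. -/
def IsHilbertSchmidtOp {H : Type*} [NormedAddCommGroup H] [InnerProductSpace ℂ H]
    (K : H →L[ℂ] H) : Prop :=
  ∀ e : HilbertBasis ℕ ℂ H, Summable fun i => ‖K (e i)‖ ^ 2

/-- An operator is trace class iff it is a product of two Hilbert–Schmidt operators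
(standard characterization of the trace class). -/
def IsTraceClassOp {H : Type*} [NormedAddCommGroup H] [InnerProductSpace ℂ H]
    (S : H →L[ℂ] H) : Prop :=
  ∃ A B : H →L[ℂ] H, IsHilbertSchmidtOp A ∧ IsHilbertSchmidtOp B ∧ S = A ∘L B

section Aux

set_option linter.unusedSectionVars false

variable {H : Type*} [NormedAddCommGroup H] [InnerProductSpace ℂ H] [CompleteSpace H]

lemma aux_parseval (e : HilbertBasis ℕ ℂ H) (x : H) :
    HasSum (fun j => ‖(⟪e j, x⟫_ℂ)‖ ^ 2) (‖x‖ ^ 2) := by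
  have h := (Complex.reCLM : ℂ →L[ℝ] ℝ).hasSum (e.hasSum_inner_mul_inner x x)
  simp only [Complex.reCLM_apply] at h
  convert h using 2 with i
  · rw [← inner_conj_symm x, ← Complex.normSq_eq_conj_mul_self]
    simp [Complex.normSq_eq_norm_sq]
    norm_cast
  · exact (norm_sq_eq_re_inner (𝕜 := ℂ) x)

set_option maxHeartbeats 1000000 in
lemma aux_adjoint_summable (e : HilbertBasis ℕ ℂ H) (T : H →L[ℂ] H)
    (hT : Summable fun i => ‖T (e i)‖ ^ 2) :
    Summable fun i => ‖(ContinuousLinearMap.adjoint T) (e i)‖ ^ 2 := by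
  set F : ℕ × ℕ → ℝ := fun p => ‖(⟪e p.2, T (e p.1)⟫_ℂ)‖ ^ 2 with hF
  have hFnn : ∀ p, 0 ≤ F p := fun p => by positivity
  have hrow : ∀ i, HasSum (fun j => F (i, j)) (‖T (e i)‖ ^ 2) :=
    fun i => aux_parseval e (T (e i))
  have hFsum : Summable F := by
    rw [summable_prod_of_nonneg hFnn]
    refine ⟨fun i => (hrow i).summable, ?_⟩
    have h3 : (fun i => ∑' j, F (i, j)) = fun i => ‖T (e i)‖ ^ 2 := by
      funext i; exact (hrow i).tsum_eq
    rw [h3]; exact hT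
  have hswap : Summable fun p : ℕ × ℕ => F (p.2, p.1) :=
    ((Equiv.prodComm ℕ ℕ).summable_iff (f := F)).mpr hFsum
  have hFswap : (fun p : ℕ × ℕ => F (p.2, p.1)) =
      fun p : ℕ × ℕ => ‖(⟪e p.2, (ContinuousLinearMap.adjoint T) (e p.1)⟫_ℂ)‖ ^ 2 := by
    funext p
    simp only [hF]
    rw [← ContinuousLinearMap.adjoint_inner_left, ← inner_conj_symm (e p.2), RCLike.norm_conj]
  rw [hFswap] at hswap
  have hrows' : ∀ i, HasSum (fun j => ‖(⟪e j, (ContinuousLinearMap.adjoint T) (e i)⟫_ℂ)‖ ^ 2)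
      (‖(ContinuousLinearMap.adjoint T) (e i)‖ ^ 2) :=
    fun i => aux_parseval e _
  have h4 := (summable_prod_of_nonneg (f := fun p : ℕ × ℕ =>
      ‖(⟪e p.2, (ContinuousLinearMap.adjoint T) (e p.1)⟫_ℂ)‖ ^ 2)
      (fun p => by positivity)).mp hswap
  have heq : (fun i => ∑' j, ‖(⟪e j, (ContinuousLinearMap.adjoint T) (e i)⟫_ℂ)‖ ^ 2) =
      fun i => ‖(ContinuousLinearMap.adjoint T) (e i)‖ ^ 2 := by
    funext i; exact (hrows' i).tsum_eq
  rw [heq] at h4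
  exact h4.2

lemma IsHilbertSchmidtOp.adjoint {T : H →L[ℂ] H} (hT : IsHilbertSchmidtOp T) :
    IsHilbertSchmidtOp (ContinuousLinearMap.adjoint T) :=
  fun e => aux_adjoint_summable e T (hT e)

lemma IsHilbertSchmidtOp.comp_left {T : H →L[ℂ] H} (hT : IsHilbertSchmidtOp T)
    (A : H →L[ℂ] H) : IsHilbertSchmidtOp (A ∘L T) := by
  intro e
  have h := (hT e).mul_left (‖A‖ ^ 2)
  refine Summable.of_nonneg_of_le (fun i => by positivity) (fun i => ?_) h
  have h1 : ‖A (T (e i))‖ ≤ ‖A‖ * ‖T (e i)‖ := A.le_opNorm _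
  calc ‖(A ∘L T) (e i)‖ ^ 2 = ‖A (T (e i))‖ ^ 2 := rfl
    _ ≤ (‖A‖ * ‖T (e i)‖) ^ 2 := pow_le_pow_left₀ (norm_nonneg _) h1 2
    _ = ‖A‖ ^ 2 * ‖T (e i)‖ ^ 2 := by ring

lemma IsHilbertSchmidtOp.comp_right {T : H →L[ℂ] H} (hT : IsHilbertSchmidtOp T)
    (B : H →L[ℂ] H) : IsHilbertSchmidtOp (T ∘L B) := by
  have h : IsHilbertSchmidtOp ((ContinuousLinearMap.adjoint B) ∘L
      (ContinuousLinearMap.adjoint T)) := (hT.adjoint).comp_left _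
  have h2 := h.adjoint
  rwa [ContinuousLinearMap.adjoint_comp, ContinuousLinearMap.adjoint_adjoint,
    ContinuousLinearMap.adjoint_adjoint] at h2

lemma IsHilbertSchmidtOp.neg {T : H →L[ℂ] H} (hT : IsHilbertSchmidtOp T) :
    IsHilbertSchmidtOp (-T) := by
  intro e
  simpa using hT e

end Aux

/-- If `D = P + K` is idempotent, `P` an orthogonal projection and `K`
Hilbert–Schmidt, then `P K P` and `P^⊥ K P^⊥` are trace class. -/
theorem corner_compressions_traceClass {H : Type*} [NormedAddCommGroup H]
    [InnerProductSpace ℂ H] [CompleteSpace H] (e₀ : HilbertBasis ℕ ℂ H)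
    (P K : H →L[ℂ] H) (hP : P ∘L P = P) (hPsa : IsSelfAdjoint P)
    (hK : IsHilbertSchmidtOp K)
    (hD : (P + K) ∘L (P + K) = P + K) :
    IsTraceClassOp (P ∘L K ∘L P) ∧ IsTraceClassOp ((1 - P) ∘L K ∘L (1 - P)) := by
  have hP' : P * P = P := hP
  have hD' : (P + K) * (P + K) = P + K := hD
  have hKeq : K = P * K + K * P + K * K := by
    have h1 : P * P + P * K + K * P + K * K = P + K := by
      rw [← hD']; noncomm_ring
    rw [hP'] at h1
    have := congrArg (fun X => X - P) h1
    simpa [add_assoc, add_sub_cancel_left] using this.symm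
  constructor
  · refine ⟨-(P ∘L K), K ∘L P, (hK.comp_left P).neg, hK.comp_right P, ?_⟩
    show P * (K * P) = (-(P * K)) * (K * P)
    have h2 : P * K * P = P * K * P + P * K * P + P * (K * (K * P)) := by
      nth_rewrite 1 [hKeq]
      simp only [mul_add, add_mul, ← mul_assoc, hP']
      rw [mul_assoc (P*K) P P, hP']
    have h3 : P * K * P + P * (K * (K * P)) = 0 := by
      have := h2
      rw [add_assoc] at this
      exact (left_eq_add.mp this)
    have h4 : P * K * P = -(P * (K * (K * P))) := eq_neg_of_add_eq_zero_left h3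
    rw [← mul_assoc, h4]
    noncomm_ring
  · refine ⟨(1 - P) ∘L K, K ∘L (1 - P), hK.comp_left _, hK.comp_right _, ?_⟩
    show (1 - P) * (K * (1 - P)) = ((1 - P) * K) * (K * (1 - P))
    have hQP : (1 - P) * P = 0 := by simp [sub_mul, hP']
    have hPQ : P * (1 - P) = 0 := by simp [mul_sub, hP']
    nth_rewrite 1 [hKeq]
    simp only [mul_add, add_mul, ← mul_assoc]
    rw [hQP]
    rw [mul_assoc ((1 - P) * K) P (1 - P), hPQ]
    noncomm_ring
end
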